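/- arXiv:1412.2376 — 14 statements merged into one kernel-verified Lean document; each statement's English description precedes it below -/
import Mathlib

section
/- If G is a twin-free graph without isolated vertices, then every vertex cover of G is a locating-dominating set of G. -/
/-- `D` is a dominating set of `G`: every vertex not in `D` has a neighbor in `D`. -/
def IsDominatingSet {V : Type*} (G : SimpleGraph V) (D : Set V) : Prop :=
  ∀ v ∉ D, ∃ u ∈ D, G.Adj u v

/-- `D` is a locating-dominating set of `G`: a dominating set such that any two distinct
vertices outside `D` have distinct neighborhoods within `D`. -/
def IsLocatingDominatingSet {V : Type*} (G : SimpleGraph V) (D : Set V) : Prop :=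
  IsDominatingSet G D ∧
    ∀ u ∉ D, ∀ v ∉ D, u ≠ v →
      {w | w ∈ D ∧ G.Adj u w} ≠ {w | w ∈ D ∧ G.Adj v w}

/-- `G` is twin-free: no two distinct vertices have equal open neighborhoods
(open twins) or equal closed neighborhoods (closed twins). -/
def TwinFree {V : Type*} (G : SimpleGraph V) : Prop :=
  ∀ u v : V, u ≠ v →
    G.neighborSet u ≠ G.neighborSet v ∧
      insert u (G.neighborSet u) ≠ insert v (G.neighborSet v)

/-- `G` has no isolated vertices. -/
def NoIsolatedVertex {V : Type*} (G : SimpleGraph V) : Prop :=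
  ∀ v : V, ∃ u, G.Adj v u

/-- `C` is a vertex cover of `G`: every edge has at least one end in `C`. -/
def IsVertexCover {V : Type*} (G : SimpleGraph V) (C : Set V) : Prop :=
  ∀ u v : V, G.Adj u v → u ∈ C ∨ v ∈ C

/-- If `G` is a twin-free graph without isolated vertices, then every vertex cover of `G`
is a locating-dominating set of `G`. -/
theorem vertexCover_isLocatingDominatingSet {V : Type*} (G : SimpleGraph V)
    (htf : TwinFree G) (hiso : NoIsolatedVertex G) (C : Set V) (hC : IsVertexCover G C) :
    IsLocatingDominatingSet G C := by
  constructor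
  · intro v hv
    obtain ⟨u, hu⟩ := hiso v
    rcases hC v u hu with h | h
    · exact absurd h hv
    · exact ⟨u, h, hu.symm⟩
  · intro u hu v hv huv heq
    apply (htf u v huv).1
    ext w
    constructor
    · intro hw
      have hwC : w ∈ C := (hC u w hw).resolve_left hu
      have : w ∈ {w | w ∈ C ∧ G.Adj u w} := ⟨hwC, hw⟩
      exact (heq ▸ this).2
    · intro hw
      have hw' : G.Adj v w := hw
      have hwC : w ∈ C := (hC v w hw').resolve_left hv
      have : w ∈ {w | w ∈ C ∧ G.Adj v w} := ⟨hwC, hw'⟩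
      exact ((heq ▸ this).2)
end

section
/- If G is a twin-free graph of order n without isolated vertices whose independence number is at least n/2, then G has a locating-dominating set of cardinality at most n/2 (equivalently, gamma_L(G) <= n/2). -/
/-- The location-domination number `γ_L(G)`: minimum cardinality of a
locating-dominating set of `G`. -/
noncomputable def locDomNumber {V : Type*} [Fintype V] (G : SimpleGraph V) : ℕ :=
  sInf {n : ℕ | ∃ D : Set V, IsLocatingDominatingSet G D ∧ D.ncard = n}

/-- `I` is an independent set of `G`: no two of its vertices are adjacent. -/
def IsIndependentSet {V : Type*} (G : SimpleGraph V) (I : Set V) : Prop :=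
  ∀ u ∈ I, ∀ v ∈ I, ¬ G.Adj u v

/-- If `G` is a twin-free graph of order `n` without isolated vertices whose independence
number is at least `n/2` (i.e. `G` has an independent set of cardinality at least `n/2`),
then `γ_L(G) ≤ n/2`. -/
theorem locDomNumber_le_half_of_indep {V : Type*} [Fintype V] (G : SimpleGraph V)
    (htf : TwinFree G) (hiso : NoIsolatedVertex G)
    (hindep : ∃ I : Set V, IsIndependentSet G I ∧ Fintype.card V ≤ 2 * I.ncard) :
    (∃ D : Set V, IsLocatingDominatingSet G D ∧ 2 * D.ncard ≤ Fintype.card V) ∧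
      2 * locDomNumber G ≤ Fintype.card V := by
  obtain ⟨I, hI, hcard⟩ := hindep
  set D : Set V := Iᶜ with hD
  -- any neighbor of a vertex of I lies in D
  have hnbr : ∀ u ∈ I, ∀ w, G.Adj u w → w ∈ D := by
    intro u hu w hadj hw
    exact hI u hu w (by simpa using hw) hadj
  have hLD : IsLocatingDominatingSet G D := by
    constructor
    · intro v hv
      have hvI : v ∈ I := by simpa [hD] using hv
      obtain ⟨u, hu⟩ := hiso v
      exact ⟨u, hnbr v hvI u hu, hu.symm⟩
    · intro u hu v hv huv heq
      have huI : u ∈ I := by simpa [hD] using hu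
      have hvI : v ∈ I := by simpa [hD] using hv
      have : G.neighborSet u = G.neighborSet v := by
        ext w
        constructor
        · intro hw
          have hw' : w ∈ {w | w ∈ D ∧ G.Adj u w} := ⟨hnbr u huI w hw, hw⟩
          rw [heq] at hw'
          exact hw'.2
        · intro hw
          have hw' : w ∈ {w | w ∈ D ∧ G.Adj v w} := ⟨hnbr v hvI w hw, hw⟩
          rw [← heq] at hw'
          exact hw'.2
      exact (htf u v huv).1 this
  have hsum : I.ncard + D.ncard = Fintype.card V := by
    simpa [hD] using Set.ncard_add_ncard_compl I
  have hDcard : 2 * D.ncard ≤ Fintype.card V := by omega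
  refine ⟨⟨D, hLD, hDcard⟩, ?_⟩
  have hle : locDomNumber G ≤ D.ncard := Nat.sInf_le ⟨D, hLD, rfl⟩
  omega
end

section
/- If G is a twin-free bipartite graph of order n without isolated vertices, then gamma_L(G) <= n/2. -/
/-- If `G` is a twin-free bipartite graph of order `n` without isolated vertices, then
`γ_L(G) ≤ n/2`. (Bipartite means 2-colorable.) -/
theorem locDomNumber_le_half_of_bipartite {V : Type*} [Fintype V] (G : SimpleGraph V)
    (htf : TwinFree G) (hiso : NoIsolatedVertex G) (hbip : G.Colorable 2) :
    2 * locDomNumber G ≤ Fintype.card V := by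
  obtain ⟨c⟩ := hbip
  have key : ∀ i : Fin 2, IsLocatingDominatingSet G {v | c v = i} := by
    intro i
    have fin2 : ∀ a b : Fin 2, a ≠ b → b ≠ i → a = i := by revert i; decide
    constructor
    · intro v hv
      obtain ⟨u, hu⟩ := hiso v
      refine ⟨u, ?_, hu.symm⟩
      exact fin2 (c u) (c v) (c.valid hu.symm) hv
    · intro u hu v hv huv heq
      have full : ∀ x : V, x ∉ ({v | c v = i} : Set V) →
          {w | w ∈ ({v | c v = i} : Set V) ∧ G.Adj x w} = G.neighborSet x := by
        intro x hx
        ext w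
        simp only [Set.mem_setOf_eq, SimpleGraph.mem_neighborSet]
        exact ⟨fun h => h.2, fun h => ⟨fin2 (c w) (c x) (c.valid h.symm) hx, h⟩⟩
      exact (htf u v huv).1 (by rw [← full u hu, ← full v hv, heq])
  have hA : locDomNumber G ≤ ({v | c v = 0} : Set V).ncard :=
    Nat.sInf_le ⟨_, key 0, rfl⟩
  have hB : locDomNumber G ≤ ({v | c v = 1} : Set V).ncard :=
    Nat.sInf_le ⟨_, key 1, rfl⟩
  have hcompl : ({v | c v = 1} : Set V) = ({v | c v = 0} : Set V)ᶜ := by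
    ext v
    simp only [Set.mem_setOf_eq, Set.mem_compl_iff]
    omega
  have := Set.ncard_add_ncard_compl ({v | c v = 0} : Set V)
  rw [Nat.card_eq_fintype_card] at this
  rw [hcompl] at hB
  omega
end

section
/- If G is a graph with no isolated vertex, then there exists a minimum dominating set S of G (i.e., a dominating set of cardinality gamma(G)) such that every vertex v of S has an S-external private neighbor, that is, a vertex outside S that is adjacent to v but to no other vertex of S. -/
/-- The domination number `γ(G)`: minimum cardinality of a dominating set of `G`. -/
noncomputable def dominationNumber {V : Type*} [Fintype V] (G : SimpleGraph V) : ℕ :=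
  sInf {n : ℕ | ∃ D : Set V, IsDominatingSet G D ∧ D.ncard = n}

/-- If `G` is a graph with no isolated vertex, then there exists a minimum dominating set
`S` of `G` such that every vertex `v ∈ S` has an `S`-external private neighbor: a vertex
outside `S` adjacent to `v` but to no other vertex of `S`. -/
theorem exists_minimum_dominatingSet_with_private_neighbors {V : Type*} [Fintype V]
    (G : SimpleGraph V) (hiso : ∀ v : V, ∃ u, G.Adj v u) :
    ∃ S : Set V, IsDominatingSet G S ∧ S.ncard = dominationNumber G ∧
      ∀ v ∈ S, ∃ w, w ∉ S ∧ G.Adj v w ∧ ∀ x ∈ S, x ≠ v → ¬ G.Adj x w := by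
  classical
  set γ := dominationNumber G with hγdef
  -- the set of achievable dominating-set sizes is nonempty
  have hune : (Set.univ : Set V).ncard ∈
      {n : ℕ | ∃ D : Set V, IsDominatingSet G D ∧ D.ncard = n} :=
    ⟨Set.univ, fun v hv => absurd (Set.mem_univ v) hv, rfl⟩
  have hγmem : γ ∈ {n : ℕ | ∃ D : Set V, IsDominatingSet G D ∧ D.ncard = n} :=
    Nat.sInf_mem ⟨_, hune⟩
  -- every dominating set has size at least γ
  have hγle : ∀ D : Set V, IsDominatingSet G D → γ ≤ D.ncard := by
    intro D hD
    exact Nat.sInf_le ⟨D, hD, rfl⟩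
  -- isolated vertices of a set
  let iso : Set V → Set V := fun D => {v | v ∈ D ∧ ∀ x ∈ D, ¬ G.Adj v x}
  -- choose a γ-set minimizing the number of isolated vertices in it
  set K := {k : ℕ | ∃ D : Set V, (IsDominatingSet G D ∧ D.ncard = γ) ∧ (iso D).ncard = k}
    with hKdef
  have hKne : K.Nonempty := by
    obtain ⟨D, hD⟩ := hγmem
    exact ⟨(iso D).ncard, D, hD, rfl⟩
  obtain ⟨D, ⟨hDdom, hDcard⟩, hDiso⟩ := Nat.sInf_mem hKne
  refine ⟨D, hDdom, hDcard, ?_⟩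
  intro v hv
  by_cases hvdi : ∃ x ∈ D, G.Adj v x
  · -- v has a neighbor inside D; minimality of D gives an external private neighbor
    have hnd : ¬ IsDominatingSet G (D \ {v}) := by
      intro hd
      have h1 := hγle _ hd
      have h2 : (D \ {v}).ncard + 1 = D.ncard := Set.ncard_diff_singleton_add_one hv
      omega
    rw [IsDominatingSet] at hnd
    push_neg at hnd
    obtain ⟨w, hwD, hw⟩ := hnd
    have hwnD : w ∉ D := by
      intro hwD'
      have hwv : w = v := by
        by_contra hne
        exact hwD ⟨hwD', hne⟩
      obtain ⟨x, hxD, hxadj⟩ := hvdi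
      have hxv : x ≠ v := fun h => G.irrefl (h ▸ hxadj)
      exact hw x ⟨hxD, hxv⟩ (by rw [hwv]; exact hxadj.symm)
    obtain ⟨u, huD, huadj⟩ := hDdom w hwnD
    have huv : u = v := by
      by_contra hne
      exact hw u ⟨huD, hne⟩ huadj
    refine ⟨w, hwnD, huv ▸ huadj, ?_⟩
    intro x hxD hxv hxadj
    exact hw x ⟨hxD, hxv⟩ hxadj
  · -- v is isolated in D
    push_neg at hvdi
    by_contra hno
    push_neg at hno
    -- every neighbor of v is outside D and has another neighbor in D
    obtain ⟨u, huadj⟩ := hiso v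
    have hunD : u ∉ D := fun h => hvdi u h huadj
    obtain ⟨x, hxD, hxv, hxadj⟩ := hno u hunD huadj
    -- swap v for u
    set D' := insert u (D \ {v}) with hD'def
    have hvnD' : v ∉ D' := by
      intro h
      rcases h with h | h
      · exact G.irrefl (h ▸ huadj)
      · exact h.2 rfl
    have hD'dom : IsDominatingSet G D' := by
      intro w hwD'
      by_cases hwv : w = v
      · exact ⟨u, Set.mem_insert _ _, hwv ▸ huadj.symm⟩
      · have hwnD : w ∉ D := by
          intro h
          exact hwD' (Set.mem_insert_of_mem _ ⟨h, hwv⟩)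
        obtain ⟨z, hzD, hzadj⟩ := hDdom w hwnD
        by_cases hzv : z = v
        · -- w is adjacent to v, so by hno it has another D-neighbor
          obtain ⟨y, hyD, hyv, hyadj⟩ := hno w hwnD (hzv ▸ hzadj)
          exact ⟨y, Set.mem_insert_of_mem _ ⟨hyD, hyv⟩, hyadj⟩
        · exact ⟨z, Set.mem_insert_of_mem _ ⟨hzD, hzv⟩, hzadj⟩
    have hunDv : u ∉ D \ {v} := fun h => hunD h.1
    have hD'card : D'.ncard = γ := by
      have h1 : D'.ncard = (D \ {v}).ncard + 1 := Set.ncard_insert_of_notMem hunDv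
      have h2 : (D \ {v}).ncard + 1 = D.ncard := Set.ncard_diff_singleton_add_one hv
      omega
    -- iso D' ⊆ iso D \ {v}
    have hsub : iso D' ⊆ iso D \ {v} := by
      intro y hy
      obtain ⟨hyD', hyiso⟩ := hy
      have hyu : y ≠ u := by
        intro h
        exact hyiso x (Set.mem_insert_of_mem _ ⟨hxD, hxv⟩) (h ▸ hxadj.symm)
      have hyDv : y ∈ D \ {v} := by
        rcases hyD' with h | h
        · exact absurd h hyu
        · exact h
      refine ⟨⟨hyDv.1, ?_⟩, hyDv.2⟩
      intro z hzD hzadj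
      by_cases hzv : z = v
      · exact hvdi y hyDv.1 (hzv ▸ hzadj.symm)
      · exact hyiso z (Set.mem_insert_of_mem _ ⟨hzD, hzv⟩) hzadj
    have hviso : v ∈ iso D := ⟨hv, hvdi⟩
    have hlt : (iso D').ncard < (iso D).ncard := by
      calc (iso D').ncard ≤ (iso D \ {v}).ncard := Set.ncard_le_ncard hsub (Set.toFinite _)
        _ < (iso D).ncard := Set.ncard_diff_singleton_lt_of_mem hviso
    have hle : sInf K ≤ (iso D').ncard := Nat.sInf_le ⟨D', ⟨hD'dom, hD'card⟩, rfl⟩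
    omega
end

section
/- For every integer k >= 2, the graph A_k satisfies gamma_L(A_k) = k, that is, its location-domination number equals half its order. -/
/-- The graph `A_k` on vertices `x_1, …, x_{2k}` (here `Fin (2*k)`, with `x_i`
corresponding to the element of value `i - 1`) in which two distinct vertices `x_i`
and `x_j` are adjacent if and only if `|i - j| ≤ k - 1`. -/
def Agraph (k : ℕ) : SimpleGraph (Fin (2 * k)) where
  Adj i j := i ≠ j ∧ (i : ℕ) ≤ (j : ℕ) + (k - 1) ∧ (j : ℕ) ≤ (i : ℕ) + (k - 1)
  symm := ⟨fun i j h => ⟨h.1.symm, h.2.2, h.2.1⟩⟩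
  loopless := ⟨fun i h => h.1 rfl⟩

lemma Agraph_adj (k : ℕ) (i j : Fin (2 * k)) :
    (Agraph k).Adj i j ↔
      (i : ℕ) ≠ (j : ℕ) ∧ (i : ℕ) ≤ (j : ℕ) + (k - 1) ∧ (j : ℕ) ≤ (i : ℕ) + (k - 1) := by
  constructor
  · exact fun h => ⟨fun hv => h.1 (Fin.ext hv), h.2.1, h.2.2⟩
  · exact fun h => ⟨fun hv => h.1 (congrArg Fin.val hv), h.2.1, h.2.2⟩

/-- Lower bound: every locating-dominating set of `A_k` has at least `k` vertices. -/
lemma Agraph_lower (k : ℕ) (hk : 2 ≤ k) (D : Set (Fin (2 * k)))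
    (hD : IsLocatingDominatingSet (Agraph k) D) : k ≤ D.ncard := by
  classical
  set S : Set (Fin (2 * k)) := Dᶜ with hS
  set S' : Set (Fin (2 * k)) := {u | u ∈ S ∧ ∃ v ∈ S, u < v} with hS'
  -- the successor in S
  have hnext : ∀ u ∈ S', ∃ v, v ∈ S ∧ u < v ∧ ∀ x ∈ S, u < x → v ≤ x := by
    intro u hu
    obtain ⟨_, v0, hv0, hlt⟩ := hu
    obtain ⟨v, hv, hmin⟩ := Set.exists_min_image {x ∈ S | u < x} id (Set.toFinite _)
      ⟨v0, hv0, hlt⟩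
    exact ⟨v, hv.1, hv.2, fun x hx hux => hmin x ⟨hx, hux⟩⟩
  choose! nxt hnxtS hnxtlt hnxtmin using hnext
  -- for each non-maximal vertex of S, a vertex of D distinguishing it from its successor
  have hdist : ∀ u ∈ S', ∃ w, w ∈ D ∧
      (((u : ℕ) ≤ (w : ℕ) + (k - 1) ∧ (w : ℕ) + k ≤ (nxt u : ℕ)) ∨
       ((u : ℕ) + k ≤ (w : ℕ) ∧ (w : ℕ) ≤ (nxt u : ℕ) + (k - 1))) := by
    intro u hu
    have hvS := hnxtS u hu
    have hlt := hnxtlt u hu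
    have huD : u ∉ D := hu.1
    have hvD : nxt u ∉ D := hvS
    have hne := hD.2 u huD (nxt u) hvD (ne_of_lt hlt)
    have hw : ∃ w, ¬ (w ∈ ({w | w ∈ D ∧ (Agraph k).Adj u w}) ↔
        w ∈ ({w | w ∈ D ∧ (Agraph k).Adj (nxt u) w})) := by
      by_contra hc
      push_neg at hc
      exact hne (Set.ext hc)
    obtain ⟨w, hw⟩ := hw
    simp only [Set.mem_setOf_eq] at hw
    have hwD : w ∈ D := by
      by_cases h : w ∈ D
      · exact h
      · exact absurd (iff_of_false (fun hc => h hc.1) (fun hc => h hc.1)) hw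
    refine ⟨w, hwD, ?_⟩
    simp only [hwD, true_and, Agraph_adj] at hw
    have h1 : (u : ℕ) < (nxt u : ℕ) := hlt
    have h2 : (nxt u : ℕ) < 2 * k := (nxt u).isLt
    have h3 : (w : ℕ) ≠ (u : ℕ) := fun hc => huD (Fin.ext hc ▸ hwD)
    have h4 : (w : ℕ) ≠ (nxt u : ℕ) := fun hc => hvD (Fin.ext hc ▸ hwD)
    omega
  choose! w hwD hwwin using hdist
  -- the chosen distinguishers are pairwise distinct
  have key : ∀ u ∈ S', ∀ u' ∈ S', u < u' → w u ≠ w u' := by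
    intro u hu u' hu' hlt heq
    have h1 := hwwin u hu
    have h2 := hwwin u' hu'
    have h3 : nxt u ≤ u' := hnxtmin u hu u' hu'.1 hlt
    have h4 : (nxt u : ℕ) ≤ (u' : ℕ) := h3
    have h5 : (u : ℕ) < (u' : ℕ) := hlt
    have h6 : (nxt u' : ℕ) < 2 * k := (nxt u').isLt
    have h7 : (w u : ℕ) = (w u' : ℕ) := congrArg Fin.val heq
    omega
  have hinj : Set.InjOn w S' := by
    intro u hu u' hu' heq
    by_contra hne
    rcases lt_or_gt_of_ne hne with h | h
    · exact key u hu u' hu' h heq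
    · exact key u' hu' u hu h heq.symm
  have hcard1 : S'.ncard ≤ D.ncard :=
    Set.ncard_le_ncard_of_injOn w (fun u hu => hwD u hu) hinj (Set.toFinite D)
  -- S \ S' is a subsingleton (only a maximum of S can fail to have a successor)
  have hsub : (S \ S').Subsingleton := by
    intro a ha b hb
    by_contra hne
    rcases lt_or_gt_of_ne hne with h | h
    · exact ha.2 ⟨ha.1, b, hb.1, h⟩
    · exact hb.2 ⟨hb.1, a, ha.1, h⟩
  have hcard2 : S.ncard ≤ S'.ncard + 1 := by
    have hcover : S ⊆ S' ∪ (S \ S') := by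
      intro x hx
      by_cases h : x ∈ S'
      · exact Or.inl h
      · exact Or.inr ⟨hx, h⟩
    have h1 : S.ncard ≤ (S' ∪ (S \ S')).ncard :=
      Set.ncard_le_ncard hcover (Set.toFinite _)
    have h2 : (S' ∪ (S \ S')).ncard ≤ S'.ncard + (S \ S').ncard :=
      Set.ncard_union_le _ _
    have h3 : (S \ S').ncard ≤ 1 := by
      rcases hsub.eq_empty_or_singleton with h | ⟨a, h⟩ <;> simp [h]
    omega
  have hcompl : D.ncard + S.ncard = 2 * k := by
    have := Set.ncard_add_ncard_compl D
    rwa [Nat.card_eq_fintype_card, Fintype.card_fin] at this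
  omega

/-- The traces on `{1, …, k}` of two distinct vertices outside it differ. -/
lemma Agraph_upper_half (k : ℕ) (hk : 2 ≤ k) (u v : Fin (2 * k))
    (hu : u ∉ {i : Fin (2 * k) | 1 ≤ (i : ℕ) ∧ (i : ℕ) ≤ k})
    (hv : v ∉ {i : Fin (2 * k) | 1 ≤ (i : ℕ) ∧ (i : ℕ) ≤ k})
    (hlt : (u : ℕ) < (v : ℕ)) :
    {w | w ∈ {i : Fin (2 * k) | 1 ≤ (i : ℕ) ∧ (i : ℕ) ≤ k} ∧ (Agraph k).Adj u w} ≠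
    {w | w ∈ {i : Fin (2 * k) | 1 ≤ (i : ℕ) ∧ (i : ℕ) ≤ k} ∧ (Agraph k).Adj v w} := by
  intro heq
  rw [Set.ext_iff] at heq
  simp only [Set.mem_setOf_eq] at hu hv
  have huB : (u : ℕ) < 2 * k := u.isLt
  have hvB : (v : ℕ) < 2 * k := v.isLt
  by_cases h0 : (u : ℕ) = 0
  · have := heq ⟨k, by omega⟩
    simp only [Set.mem_setOf_eq, Agraph_adj] at this
    omega
  · have := heq ⟨(u : ℕ) - k + 1, by omega⟩
    simp only [Set.mem_setOf_eq, Agraph_adj] at this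
    omega

/-- Upper bound: `{1, …, k}` is a locating-dominating set of `A_k` of size `k`. -/
lemma Agraph_upper (k : ℕ) (hk : 2 ≤ k) :
    IsLocatingDominatingSet (Agraph k) {i : Fin (2 * k) | 1 ≤ (i : ℕ) ∧ (i : ℕ) ≤ k} ∧
    ({i : Fin (2 * k) | 1 ≤ (i : ℕ) ∧ (i : ℕ) ≤ k} : Set (Fin (2 * k))).ncard = k := by
  refine ⟨⟨?_, ?_⟩, ?_⟩
  · intro v hv
    simp only [Set.mem_setOf_eq] at hv
    have hvB : (v : ℕ) < 2 * k := v.isLt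
    by_cases h0 : (v : ℕ) = 0
    · refine ⟨⟨1, by omega⟩, by simp only [Set.mem_setOf_eq]; omega, ?_⟩
      rw [Agraph_adj]; simp only []; omega
    · refine ⟨⟨(v : ℕ) - k + 1, by omega⟩, by simp only [Set.mem_setOf_eq]; omega, ?_⟩
      rw [Agraph_adj]; simp only []; omega
  · intro u hu v hv hne
    rcases lt_trichotomy (u : ℕ) (v : ℕ) with h | h | h
    · exact Agraph_upper_half k hk u v hu hv h
    · exact absurd (Fin.ext h) hne
    · exact (Agraph_upper_half k hk v u hv hu h).symm
  · have hset : {i : Fin (2 * k) | 1 ≤ (i : ℕ) ∧ (i : ℕ) ≤ k} =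
        ↑(Finset.Icc (⟨1, by omega⟩ : Fin (2 * k)) ⟨k, by omega⟩) := by
      ext i
      simp [Finset.mem_Icc, Fin.le_def]
    rw [hset, Set.ncard_coe_finset, Fin.card_Icc]
    simp

/-- For every integer `k ≥ 2`, the graph `A_k` satisfies `γ_L(A_k) = k`, i.e. its
location-domination number equals half its order. -/
theorem locDomNumber_Agraph (k : ℕ) (hk : 2 ≤ k) :
    locDomNumber (Agraph k) = k := by
  have hup := Agraph_upper k hk
  have hmem : k ∈ {n : ℕ | ∃ D : Set (Fin (2 * k)),
      IsLocatingDominatingSet (Agraph k) D ∧ D.ncard = n} :=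
    ⟨_, hup.1, hup.2⟩
  refine le_antisymm (Nat.sInf_le hmem) (le_csInf ⟨k, hmem⟩ ?_)
  rintro n ⟨D, hD, rfl⟩
  exact Agraph_lower k hk D hD
end

section
/- For every integer k >= 2, the set {x_1, ..., x_{k-1}} ∪ {x_{2k}} is a locating-dominating set of the graph A_k of cardinality k. -/
/-- For every integer `k ≥ 2`, the set `{x_1, …, x_{k-1}} ∪ {x_{2k}}` (i.e. the vertices
of value `< k - 1` together with the vertex of value `2k - 1`) is a locating-dominating
set of `A_k` of cardinality `k`. -/
theorem Agraph_locatingDominatingSet (k : ℕ) (hk : 2 ≤ k) :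
    IsLocatingDominatingSet (Agraph k)
        {i : Fin (2 * k) | (i : ℕ) < k - 1 ∨ (i : ℕ) = 2 * k - 1} ∧
      ({i : Fin (2 * k) | (i : ℕ) < k - 1 ∨ (i : ℕ) = 2 * k - 1} : Set (Fin (2 * k))).ncard
        = k := by
  set D : Set (Fin (2*k)) := {i : Fin (2 * k) | (i : ℕ) < k - 1 ∨ (i : ℕ) = 2 * k - 1} with hD
  refine ⟨⟨?_, ?_⟩, ?_⟩
  · -- dominating
    intro v hv
    simp only [hD, Set.mem_setOf_eq, not_or] at hv
    obtain ⟨h1, h2⟩ := hv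
    have hv1 : (v:ℕ) < 2*k := v.isLt
    by_cases hvk : k ≤ (v:ℕ)
    · refine ⟨⟨2*k-1, by omega⟩, Or.inr rfl, ?_⟩
      refine ⟨?_, ?_, ?_⟩
      · intro h; apply h2; rw [← h]
      · simp only [Fin.val_mk]; omega
      · simp only [Fin.val_mk]; omega
    · refine ⟨⟨0, by omega⟩, Or.inl (by simp; omega), ?_⟩
      refine ⟨?_, ?_, ?_⟩
      · intro h
        have : (0:ℕ) = (v:ℕ) := congrArg Fin.val h
        omega
      · simp only [Fin.val_mk]; omega
      · simp only [Fin.val_mk]; omega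
  · -- locating
    have key : ∀ a b : Fin (2*k), a ∉ D → b ∉ D → (a:ℕ) < (b:ℕ) →
        {w | w ∈ D ∧ (Agraph k).Adj a w} ≠ {w | w ∈ D ∧ (Agraph k).Adj b w} := by
      intro a b ha hb hab hset
      simp only [hD, Set.mem_setOf_eq, not_or] at ha hb
      have hb1 : (b:ℕ) < 2*k := b.isLt
      have ha2 : k - 1 ≤ (a:ℕ) := by omega
      set w : Fin (2*k) := ⟨(a:ℕ) - (k-1), by omega⟩ with hw
      have hwval : (w:ℕ) = (a:ℕ) - (k-1) := rfl
      have hwD : w ∈ D := Or.inl (by rw [hwval]; omega)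
      have hmem : w ∈ {w | w ∈ D ∧ (Agraph k).Adj a w} := by
        refine ⟨hwD, ?_, ?_, ?_⟩
        · intro h
          have : (a:ℕ) = (w:ℕ) := congrArg Fin.val h
          omega
        · rw [hwval]; omega
        · rw [hwval]; omega
      rw [hset] at hmem
      obtain ⟨_, _, _, hle⟩ := hmem
      rw [hwval] at hle
      omega
    intro u hu v hv huv
    rcases lt_trichotomy (u:ℕ) (v:ℕ) with h | h | h
    · exact key u v hu hv h
    · exact absurd (Fin.ext h) huv
    · exact (key v u hv hu h).symm
  · -- cardinality
    have hlt : (2*k-1 : ℕ) < 2*k := by omega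
    have hT : {i : Fin (2 * k) | (i : ℕ) < k - 1} = Set.range (Fin.castLE (show k-1 ≤ 2*k by omega)) := by
      ext i
      constructor
      · intro hi; exact ⟨⟨(i:ℕ), hi⟩, Fin.ext rfl⟩
      · rintro ⟨j, rfl⟩; exact j.isLt
    have hDeq : D = insert (⟨2*k-1, hlt⟩ : Fin (2*k)) {i : Fin (2 * k) | (i : ℕ) < k - 1} := by
      ext i
      simp only [hD, Set.mem_setOf_eq, Set.mem_insert_iff]
      constructor
      · rintro (h | h)
        · exact Or.inr h
        · exact Or.inl (Fin.ext h)
      · rintro (rfl | h)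
        · exact Or.inr rfl
        · exact Or.inl h
    rw [hDeq, Set.ncard_insert_of_notMem (by simp only [Set.mem_setOf_eq]; omega)
      (Set.toFinite _), hT, ← Set.image_univ,
      Set.ncard_image_of_injective _ (Fin.castLE_injective _), Set.ncard_univ]
    simp only [Nat.card_eq_fintype_card, Fintype.card_fin]
    omega
end

section
/- For every integer k >= 2, every locating set of the graph A_k has cardinality at least k; in particular, the minimum cardinality of a locating set of A_k equals gamma_L(A_k), i.e., A_k is combinable. -/
/-- `S` is a locating set of `G`: any two distinct vertices outside `S` have distinct
(possibly empty) neighborhoods within `S`. -/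
def IsLocatingSet {V : Type*} (G : SimpleGraph V) (S : Set V) : Prop :=
  ∀ u ∉ S, ∀ v ∉ S, u ≠ v →
    {w | w ∈ S ∧ G.Adj u w} ≠ {w | w ∈ S ∧ G.Adj v w}

/-- The minimum cardinality of a locating set of `G`. -/
noncomputable def locNumber {V : Type*} [Fintype V] (G : SimpleGraph V) : ℕ :=
  sInf {n : ℕ | ∃ S : Set V, IsLocatingSet G S ∧ S.ncard = n}

/-- `G` is combinable: the minimum cardinality of a locating set equals `γ_L(G)`. -/
def Combinable {V : Type*} [Fintype V] (G : SimpleGraph V) : Prop :=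
  locNumber G = locDomNumber G

lemma agraph_adj {k : ℕ} {i j : Fin (2 * k)} :
    (Agraph k).Adj i j ↔ i ≠ j ∧ (i : ℕ) ≤ (j : ℕ) + (k - 1) ∧ (j : ℕ) ≤ (i : ℕ) + (k - 1) :=
  Iff.rfl

lemma ncard_left_half (k : ℕ) : {u : Fin (2 * k) | (u : ℕ) < k}.ncard = k := by
  have h : {u : Fin (2 * k) | (u : ℕ) < k} =
      (fun i : Fin k => (⟨(i : ℕ), by omega⟩ : Fin (2 * k))) '' Set.univ := by
    ext u
    simp only [Set.mem_setOf_eq, Set.image_univ, Set.mem_range]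
    constructor
    · intro h; exact ⟨⟨(u : ℕ), h⟩, by ext; rfl⟩
    · rintro ⟨i, rfl⟩; exact i.2
  rw [h, Set.ncard_image_of_injective _ (fun a b hab => by
    apply Fin.ext; simpa [Fin.ext_iff] using hab), Set.ncard_univ, Nat.card_eq_fintype_card,
    Fintype.card_fin]

lemma ncard_right_half (k : ℕ) : {u : Fin (2 * k) | k ≤ (u : ℕ)}.ncard = k := by
  have h : {u : Fin (2 * k) | k ≤ (u : ℕ)} =
      (fun i : Fin k => (⟨(i : ℕ) + k, by omega⟩ : Fin (2 * k))) '' Set.univ := by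
    ext u
    simp only [Set.mem_setOf_eq, Set.image_univ, Set.mem_range]
    constructor
    · intro h
      refine ⟨⟨(u : ℕ) - k, by have := u.isLt; omega⟩, ?_⟩
      ext; simp; omega
    · rintro ⟨i, rfl⟩; simp
  rw [h, Set.ncard_image_of_injective _ (fun a b hab => by
    apply Fin.ext; simpa [Fin.ext_iff] using hab), Set.ncard_univ,
    Nat.card_eq_fintype_card, Fintype.card_fin]

lemma exists_full_trace_left (k : ℕ) (hk : 2 ≤ k) (S : Set (Fin (2 * k)))
    (hS : IsLocatingSet (Agraph k) S) (hm : S.ncard < k) :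
    ∃ u : Fin (2 * k), (u : ℕ) < k ∧ u ∉ S ∧ {w | w ∈ S ∧ (Agraph k).Adj u w} = S := by
  classical
  set m := S.ncard with hmdef
  set W : Fin (2 * k) → Set (Fin (2 * k)) :=
    fun u => S ∩ {w | (w : ℕ) ≤ (u : ℕ) + (k - 1)} with hW
  have htr : ∀ u : Fin (2 * k), (u : ℕ) < k → u ∉ S →
      {w | w ∈ S ∧ (Agraph k).Adj u w} = W u := by
    intro u hu huS
    ext w
    simp only [hW, Set.mem_setOf_eq, Set.mem_inter_iff, agraph_adj]
    constructor
    · rintro ⟨hwS, _, _, h3⟩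
      exact ⟨hwS, h3⟩
    · rintro ⟨hwS, hle⟩
      refine ⟨hwS, ?_, by omega, hle⟩
      rintro rfl; exact huS hwS
  set g : Fin (2 * k) → ℕ := fun u => (W u).ncard with hg
  set LO : Set (Fin (2 * k)) := {u | (u : ℕ) < k} \ S with hLO
  set a : ℕ := ({u : Fin (2 * k) | (u : ℕ) < k} ∩ S).ncard with ha
  have hmono : ∀ u v : Fin (2 * k), (u : ℕ) ≤ (v : ℕ) → W u ⊆ W v := by
    intro u v huv w hw
    exact ⟨hw.1, by have := hw.2; simp only [Set.mem_setOf_eq] at this ⊢; omega⟩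
  have hkey : ∀ u ∈ LO, ∀ v ∈ LO, (u : ℕ) ≤ (v : ℕ) → g u = g v → u = v := by
    intro u hu v hv huv hguv
    by_contra hne
    have hWeq : W u = W v :=
      Set.eq_of_subset_of_ncard_le (hmono u v huv) (le_of_eq hguv.symm) (Set.toFinite _)
    exact hS u hu.2 v hv.2 hne (by rw [htr u hu.1 hu.2, htr v hv.1 hv.2, hWeq])
  have hinj : Set.InjOn g LO := by
    intro u hu v hv hguv
    rcases le_total (u : ℕ) (v : ℕ) with h | h
    · exact hkey u hu v hv h hguv
    · exact (hkey v hv u hu h hguv.symm).symm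
  have hmaps : ∀ u ∈ LO, g u ∈ (↑(Finset.Icc a m) : Set ℕ) := by
    intro u hu
    simp only [Finset.coe_Icc, Set.mem_Icc]
    constructor
    · apply Set.ncard_le_ncard _ (Set.toFinite _)
      intro w hw
      exact ⟨hw.2, by have := hw.1; simp only [Set.mem_setOf_eq] at this ⊢; omega⟩
    · exact Set.ncard_le_ncard Set.inter_subset_left (Set.toFinite _)
  have ham : a ≤ m := Set.ncard_le_ncard Set.inter_subset_right (Set.toFinite _)
  have hLOcard : a + LO.ncard = k := by
    rw [ha, hLO]
    conv_rhs => rw [← ncard_left_half k]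
    exact Set.ncard_inter_add_ncard_diff_eq_ncard _ S (Set.toFinite _)
  have hle : LO.ncard ≤ (Finset.Icc a m).card := by
    have := Set.ncard_le_ncard_of_injOn g hmaps hinj (Set.toFinite _)
    rwa [Set.ncard_coe_finset] at this
  rw [Nat.card_Icc] at hle
  have hsurj := Set.surj_on_of_inj_on_of_ncard_le (s := LO) (fun u _ => g u)
    (fun u hu => hmaps u hu) (fun u v hu hv h => hinj hu hv h)
    (by rw [Set.ncard_coe_finset, Nat.card_Icc]; omega) (Set.toFinite _)
  obtain ⟨u, hu, hgu⟩ := hsurj m (by simp only [Finset.coe_Icc, Set.mem_Icc]; omega)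
  refine ⟨u, hu.1, hu.2, ?_⟩
  rw [htr u hu.1 hu.2]
  exact Set.eq_of_subset_of_ncard_le Set.inter_subset_left (le_of_eq hgu) (Set.toFinite _)

lemma exists_full_trace_right (k : ℕ) (hk : 2 ≤ k) (S : Set (Fin (2 * k)))
    (hS : IsLocatingSet (Agraph k) S) (hm : S.ncard < k) :
    ∃ u : Fin (2 * k), k ≤ (u : ℕ) ∧ u ∉ S ∧ {w | w ∈ S ∧ (Agraph k).Adj u w} = S := by
  classical
  set m := S.ncard with hmdef
  set W : Fin (2 * k) → Set (Fin (2 * k)) :=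
    fun u => S ∩ {w | (u : ℕ) ≤ (w : ℕ) + (k - 1)} with hW
  have htr : ∀ u : Fin (2 * k), k ≤ (u : ℕ) → u ∉ S →
      {w | w ∈ S ∧ (Agraph k).Adj u w} = W u := by
    intro u hu huS
    ext w
    simp only [hW, Set.mem_setOf_eq, Set.mem_inter_iff, agraph_adj]
    constructor
    · rintro ⟨hwS, _, h2, _⟩
      exact ⟨hwS, h2⟩
    · rintro ⟨hwS, hle⟩
      have hw2 := w.isLt
      refine ⟨hwS, ?_, hle, by omega⟩
      rintro rfl; exact huS hwS
  set g : Fin (2 * k) → ℕ := fun u => (W u).ncard with hg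
  set LO : Set (Fin (2 * k)) := {u | k ≤ (u : ℕ)} \ S with hLO
  set a : ℕ := ({u : Fin (2 * k) | k ≤ (u : ℕ)} ∩ S).ncard with ha
  have hmono : ∀ u v : Fin (2 * k), (u : ℕ) ≤ (v : ℕ) → W v ⊆ W u := by
    intro u v huv w hw
    exact ⟨hw.1, by have := hw.2; simp only [Set.mem_setOf_eq] at this ⊢; omega⟩
  have hkey : ∀ u ∈ LO, ∀ v ∈ LO, (u : ℕ) ≤ (v : ℕ) → g u = g v → u = v := by
    intro u hu v hv huv hguv
    by_contra hne
    have hWeq : W v = W u :=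
      Set.eq_of_subset_of_ncard_le (hmono u v huv) (le_of_eq hguv) (Set.toFinite _)
    exact hS u hu.2 v hv.2 hne (by rw [htr u hu.1 hu.2, htr v hv.1 hv.2, hWeq])
  have hinj : Set.InjOn g LO := by
    intro u hu v hv hguv
    rcases le_total (u : ℕ) (v : ℕ) with h | h
    · exact hkey u hu v hv h hguv
    · exact (hkey v hv u hu h hguv.symm).symm
  have hmaps : ∀ u ∈ LO, g u ∈ (↑(Finset.Icc a m) : Set ℕ) := by
    intro u hu
    simp only [Finset.coe_Icc, Set.mem_Icc]
    constructor
    · apply Set.ncard_le_ncard _ (Set.toFinite _)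
      intro w hw
      refine ⟨hw.2, ?_⟩
      have h1 := hw.1
      have h2 := u.isLt
      simp only [Set.mem_setOf_eq] at h1 ⊢
      omega
    · exact Set.ncard_le_ncard Set.inter_subset_left (Set.toFinite _)
  have ham : a ≤ m := Set.ncard_le_ncard Set.inter_subset_right (Set.toFinite _)
  have hLOcard : a + LO.ncard = k := by
    rw [ha, hLO]
    conv_rhs => rw [← ncard_right_half k]
    exact Set.ncard_inter_add_ncard_diff_eq_ncard _ S (Set.toFinite _)
  have hle : LO.ncard ≤ (Finset.Icc a m).card := by
    have := Set.ncard_le_ncard_of_injOn g hmaps hinj (Set.toFinite _)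
    rwa [Set.ncard_coe_finset] at this
  rw [Nat.card_Icc] at hle
  have hsurj := Set.surj_on_of_inj_on_of_ncard_le (s := LO) (fun u _ => g u)
    (fun u hu => hmaps u hu) (fun u v hu hv h => hinj hu hv h)
    (by rw [Set.ncard_coe_finset, Nat.card_Icc]; omega) (Set.toFinite _)
  obtain ⟨u, hu, hgu⟩ := hsurj m (by simp only [Finset.coe_Icc, Set.mem_Icc]; omega)
  refine ⟨u, hu.1, hu.2, ?_⟩
  rw [htr u hu.1 hu.2]
  exact Set.eq_of_subset_of_ncard_le Set.inter_subset_left (le_of_eq hgu) (Set.toFinite _)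

lemma agraph_locating_ge (k : ℕ) (hk : 2 ≤ k) (S : Set (Fin (2 * k)))
    (hS : IsLocatingSet (Agraph k) S) : k ≤ S.ncard := by
  by_contra h
  push_neg at h
  obtain ⟨u, hu1, hu2, hu3⟩ := exists_full_trace_left k hk S hS h
  obtain ⟨v, hv1, hv2, hv3⟩ := exists_full_trace_right k hk S hS h
  have hne : u ≠ v := by
    intro huv
    rw [huv] at hu1
    omega
  exact hS u hu2 v hv2 hne (hu3.trans hv3.symm)

lemma Dzero_ncard (k : ℕ) (hk : 2 ≤ k) :
    {u : Fin (2 * k) | 1 ≤ (u : ℕ) ∧ (u : ℕ) ≤ k}.ncard = k := by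
  have h : {u : Fin (2 * k) | 1 ≤ (u : ℕ) ∧ (u : ℕ) ≤ k} =
      (fun i : Fin k => (⟨(i : ℕ) + 1, by omega⟩ : Fin (2 * k))) '' Set.univ := by
    ext u
    simp only [Set.mem_setOf_eq, Set.image_univ, Set.mem_range]
    constructor
    · rintro ⟨h1, h2⟩
      refine ⟨⟨(u : ℕ) - 1, by omega⟩, ?_⟩
      ext; simp; omega
    · rintro ⟨i, rfl⟩; simp
  rw [h, Set.ncard_image_of_injective _ (fun a b hab => by
    apply Fin.ext; simpa [Fin.ext_iff] using hab), Set.ncard_univ,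
    Nat.card_eq_fintype_card, Fintype.card_fin]

lemma Dzero_LD (k : ℕ) (hk : 2 ≤ k) :
    IsLocatingDominatingSet (Agraph k) {u : Fin (2 * k) | 1 ≤ (u : ℕ) ∧ (u : ℕ) ≤ k} := by
  set D : Set (Fin (2 * k)) := {u | 1 ≤ (u : ℕ) ∧ (u : ℕ) ≤ k} with hD
  have hmem : ∀ u : Fin (2 * k), u ∈ D ↔ 1 ≤ (u : ℕ) ∧ (u : ℕ) ≤ k := fun _ => Iff.rfl
  constructor
  · -- dominating
    intro v hv
    rw [hmem] at hv; push_neg at hv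
    have hv2 := v.isLt
    by_cases h0 : (v : ℕ) = 0
    · refine ⟨⟨1, by omega⟩, ?_, ?_⟩
      · rw [hmem]; exact ⟨le_rfl, show (1 : ℕ) ≤ k by omega⟩
      · rw [agraph_adj]
        refine ⟨?_, show (1 : ℕ) ≤ (v : ℕ) + (k - 1) by omega,
          show (v : ℕ) ≤ 1 + (k - 1) by omega⟩
        intro h; have h1 : (1 : ℕ) = (v : ℕ) := congrArg Fin.val h; omega
    · have hvk : k + 1 ≤ (v : ℕ) := by
        rcases Nat.lt_or_ge (v : ℕ) 1 with h | h
        · omega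
        · exact hv h
      refine ⟨⟨k, by omega⟩, ?_, ?_⟩
      · rw [hmem]; exact ⟨show (1 : ℕ) ≤ k by omega, le_rfl⟩
      · rw [agraph_adj]
        refine ⟨?_, show (k : ℕ) ≤ (v : ℕ) + (k - 1) by omega,
          show (v : ℕ) ≤ k + (k - 1) by omega⟩
        intro h; have : (k : ℕ) = (v : ℕ) := congrArg Fin.val h; omega
  · -- locating
    intro u hu v hv huv
    rw [hmem] at hu hv; push_neg at hu hv
    have hu2 := u.isLt
    have hv2 := v.isLt
    have hcase : ∀ w : Fin (2 * k), (¬(1 ≤ (w : ℕ) ∧ (w : ℕ) ≤ k)) →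
        (w : ℕ) = 0 ∨ k + 1 ≤ (w : ℕ) := by intro w hw; omega
    have hucase := hcase u (by push_neg; exact hu)
    have hvcase := hcase v (by push_neg; exact hv)
    have hsep : ∀ x y : Fin (2 * k), (x : ℕ) = 0 → k + 1 ≤ (y : ℕ) →
        {w | w ∈ D ∧ (Agraph k).Adj x w} ≠ {w | w ∈ D ∧ (Agraph k).Adj y w} := by
      intro x y hx hy heq
      have hy2 := y.isLt
      have hwmem : (⟨k, by omega⟩ : Fin (2 * k)) ∈ {w | w ∈ D ∧ (Agraph k).Adj y w} := by
        refine ⟨by rw [hmem]; exact ⟨show (1 : ℕ) ≤ k by omega, le_rfl⟩, ?_⟩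
        rw [agraph_adj]
        refine ⟨?_, show (y : ℕ) ≤ k + (k - 1) by omega,
          show (k : ℕ) ≤ (y : ℕ) + (k - 1) by omega⟩
        intro h; have : (y : ℕ) = k := congrArg Fin.val h; omega
      rw [← heq] at hwmem
      have := hwmem.2
      rw [agraph_adj] at this
      have h3 : (k : ℕ) ≤ (x : ℕ) + (k - 1) := this.2.2
      omega
    rcases hucase with hu0 | hub
    · rcases hvcase with hv0 | hvb
      · exact absurd (Fin.ext (by omega)) huv
      · exact hsep u v hu0 hvb
    · rcases hvcase with hv0 | hvb
      · exact fun heq => hsep v u hv0 hub heq.symm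
      · have hsep2 : ∀ x y : Fin (2 * k), k + 1 ≤ (x : ℕ) → (x : ℕ) < (y : ℕ) →
            {w | w ∈ D ∧ (Agraph k).Adj x w} ≠ {w | w ∈ D ∧ (Agraph k).Adj y w} := by
          intro x y hx hxy heq
          have hx2 := x.isLt
          have hy2 := y.isLt
          have hwmem : (⟨(x : ℕ) - (k - 1), by omega⟩ : Fin (2 * k)) ∈
              {w | w ∈ D ∧ (Agraph k).Adj x w} := by
            refine ⟨by rw [hmem]; exact ⟨show (1 : ℕ) ≤ (x : ℕ) - (k - 1) by omega,
              show (x : ℕ) - (k - 1) ≤ k by omega⟩, ?_⟩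
            rw [agraph_adj]
            refine ⟨?_, show (x : ℕ) ≤ ((x : ℕ) - (k - 1)) + (k - 1) by omega,
              show (x : ℕ) - (k - 1) ≤ (x : ℕ) + (k - 1) by omega⟩
            intro h; have : (x : ℕ) = (x : ℕ) - (k - 1) := congrArg Fin.val h; omega
          rw [heq] at hwmem
          have := hwmem.2
          rw [agraph_adj] at this
          have h2 : (y : ℕ) ≤ ((x : ℕ) - (k - 1)) + (k - 1) := this.2.1
          omega
        rcases Nat.lt_trichotomy (u : ℕ) (v : ℕ) with h | h | h
        · exact hsep2 u v hub h
        · exact absurd (Fin.ext h) huv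
        · exact fun heq => hsep2 v u hvb h heq.symm


/-- For every integer `k ≥ 2`, every locating set of `A_k` has cardinality at least `k`;
in particular the minimum cardinality of a locating set of `A_k` equals `γ_L(A_k)`,
i.e. `A_k` is combinable. -/
theorem Agraph_combinable (k : ℕ) (hk : 2 ≤ k) :
    (∀ S : Set (Fin (2 * k)), IsLocatingSet (Agraph k) S → k ≤ S.ncard) ∧
      Combinable (Agraph k) := by
  have hpart1 : ∀ S : Set (Fin (2 * k)), IsLocatingSet (Agraph k) S → k ≤ S.ncard :=
    fun S hS => agraph_locating_ge k hk S hS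
  refine ⟨hpart1, ?_⟩
  have hLD := Dzero_LD k hk
  have hcard := Dzero_ncard k hk
  have hlocmem : k ∈ {n : ℕ | ∃ S : Set (Fin (2 * k)), IsLocatingSet (Agraph k) S ∧
      S.ncard = n} := ⟨_, hLD.2, hcard⟩
  have hldmem : k ∈ {n : ℕ | ∃ D : Set (Fin (2 * k)), IsLocatingDominatingSet (Agraph k) D ∧
      D.ncard = n} := ⟨_, hLD, hcard⟩
  have h1 : locNumber (Agraph k) = k := by
    apply le_antisymm (Nat.sInf_le hlocmem)
    obtain ⟨S, hSloc, hScard⟩ := Nat.sInf_mem (⟨k, hlocmem⟩ : Set.Nonempty _)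
    rw [← hScard]
    exact hpart1 S hSloc
  have h2 : locDomNumber (Agraph k) = k := by
    apply le_antisymm (Nat.sInf_le hldmem)
    obtain ⟨D', hD'ld, hD'card⟩ := Nat.sInf_mem (⟨k, hldmem⟩ : Set.Nonempty _)
    rw [← hD'card]
    exact hpart1 D' hD'ld.2
  rw [Combinable, h1, h2]
end

section
/- If G and H are two combinable graphs, then every locating-dominating set of the complete join G ⋈ H has cardinality at least gamma_L(G) + gamma_L(H); that is, gamma_L(G ⋈ H) >= gamma_L(G) + gamma_L(H). -/
/-- The complete join `G ⋈ H` of two (vertex-disjoint) graphs `G` and `H`: their disjoint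
union together with all edges between `V(G)` and `V(H)`. -/
def CompleteJoin {V W : Type*} (G : SimpleGraph V) (H : SimpleGraph W) :
    SimpleGraph (V ⊕ W) where
  Adj x y :=
    match x, y with
    | Sum.inl a, Sum.inl b => G.Adj a b
    | Sum.inr a, Sum.inr b => H.Adj a b
    | _, _ => True
  symm := by
    refine ⟨?_⟩
    rintro (a | a) (b | b) h
    · exact h.symm
    · trivial
    · trivial
    · exact h.symm
  loopless := by
    refine ⟨?_⟩
    rintro (a | a) h
    · exact G.irrefl h
    · exact H.irrefl h

/-- If `G` and `H` are two combinable graphs, then every locating-dominating set of the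
complete join `G ⋈ H` has cardinality at least `γ_L(G) + γ_L(H)`; that is,
`γ_L(G ⋈ H) ≥ γ_L(G) + γ_L(H)`. -/
theorem locDomNumber_completeJoin_ge {V W : Type*} [Fintype V] [Fintype W]
    (G : SimpleGraph V) (H : SimpleGraph W) (hG : Combinable G) (hH : Combinable H) :
    (∀ D : Set (V ⊕ W), IsLocatingDominatingSet (CompleteJoin G H) D →
        locDomNumber G + locDomNumber H ≤ D.ncard) ∧
      locDomNumber G + locDomNumber H ≤ locDomNumber (CompleteJoin G H) := by
  have key : ∀ D : Set (V ⊕ W), IsLocatingDominatingSet (CompleteJoin G H) D →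
      locDomNumber G + locDomNumber H ≤ D.ncard := by
    intro D hD
    set DV : Set V := Sum.inl ⁻¹' D with hDV
    set DW : Set W := Sum.inr ⁻¹' D with hDW
    have hVloc : IsLocatingSet G DV := by
      intro u hu v hv huv heq
      apply hD.2 (Sum.inl u) hu (Sum.inl v) hv (by simpa using huv)
      ext x
      rcases x with a | b
      · constructor
        · rintro ⟨hx, hadj⟩
          have : a ∈ {w | w ∈ DV ∧ G.Adj u w} := ⟨hx, hadj⟩
          rw [heq] at this
          exact ⟨this.1, this.2⟩
        · rintro ⟨hx, hadj⟩
          have : a ∈ {w | w ∈ DV ∧ G.Adj v w} := ⟨hx, hadj⟩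
          rw [← heq] at this
          exact ⟨this.1, this.2⟩
      · constructor
        · rintro ⟨hx, _⟩; exact ⟨hx, trivial⟩
        · rintro ⟨hx, _⟩; exact ⟨hx, trivial⟩
    have hWloc : IsLocatingSet H DW := by
      intro u hu v hv huv heq
      apply hD.2 (Sum.inr u) hu (Sum.inr v) hv (by simpa using huv)
      ext x
      rcases x with a | b
      · constructor
        · rintro ⟨hx, _⟩; exact ⟨hx, trivial⟩
        · rintro ⟨hx, _⟩; exact ⟨hx, trivial⟩
      · constructor
        · rintro ⟨hx, hadj⟩
          have : b ∈ {w | w ∈ DW ∧ H.Adj u w} := ⟨hx, hadj⟩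
          rw [heq] at this
          exact ⟨this.1, this.2⟩
        · rintro ⟨hx, hadj⟩
          have : b ∈ {w | w ∈ DW ∧ H.Adj v w} := ⟨hx, hadj⟩
          rw [← heq] at this
          exact ⟨this.1, this.2⟩
    have hV : locDomNumber G ≤ DV.ncard := by
      rw [← hG]
      exact Nat.sInf_le ⟨DV, hVloc, rfl⟩
    have hW : locDomNumber H ≤ DW.ncard := by
      rw [← hH]
      exact Nat.sInf_le ⟨DW, hWloc, rfl⟩
    have hDeq : D = Sum.inl '' DV ∪ Sum.inr '' DW := by
      ext x
      rcases x with a | b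
      · simp [hDV]
      · simp [hDW]
    have hcard : D.ncard = DV.ncard + DW.ncard := by
      rw [hDeq, Set.ncard_union_eq, Set.ncard_image_of_injective _ Sum.inl_injective,
        Set.ncard_image_of_injective _ Sum.inr_injective]
      · rw [Set.disjoint_iff_forall_ne]
        rintro x ⟨a, _, rfl⟩ y ⟨b, _, rfl⟩
        simp
    rw [hcard]
    exact Nat.add_le_add hV hW
  refine ⟨key, ?_⟩
  have hne : (Set.univ : Set (V ⊕ W)).ncard ∈
      {n : ℕ | ∃ D : Set (V ⊕ W), IsLocatingDominatingSet (CompleteJoin G H) D ∧ D.ncard = n} := by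
    refine ⟨Set.univ, ⟨?_, ?_⟩, rfl⟩
    · intro v hv; exact absurd (Set.mem_univ v) hv
    · intro u hu; exact absurd (Set.mem_univ u) hu
  obtain ⟨D, hD, hcard⟩ := Nat.sInf_mem (⟨_, hne⟩ : Set.Nonempty _)
  unfold locDomNumber
  rw [← hcard]
  exact key D hD
end

section
/- Every tree T in the family 𝒯, of order n, satisfies gamma_L(T) = n/2. -/
/-- `v` is a leaf of `G`: it has exactly one neighbor. -/
def IsLeaf {V : Type*} (G : SimpleGraph V) (v : V) : Prop :=
  (G.neighborSet v).ncard = 1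

/-- `M` is a perfect matching of `G` and `c` a black/white coloring (`true` = black,
`false` = white) such that every edge of `M` has one white end and one black end, and
every white vertex is either a leaf, or has degree 2 and is adjacent to a black vertex
that has a white leaf as a neighbor. -/
def GoodMatchingColoring {V : Type*} (G : SimpleGraph V) (M : G.Subgraph)
    (c : V → Bool) : Prop :=
  M.IsPerfectMatching ∧
    (∀ u v : V, M.Adj u v → c u ≠ c v) ∧
    (∀ w : V, c w = false →
      IsLeaf G w ∨
        ((G.neighborSet w).ncard = 2 ∧
          ∃ b : V, G.Adj w b ∧ c b = true ∧
            ∃ l : V, G.Adj b l ∧ c l = false ∧ IsLeaf G l))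

/-- The family `𝒯` of trees admitting a perfect matching together with a black/white
coloring as in `GoodMatchingColoring`. -/
def FamilyT {V : Type*} (G : SimpleGraph V) : Prop :=
  G.IsTree ∧ ∃ (M : G.Subgraph) (c : V → Bool), GoodMatchingColoring G M c

/-- Every tree `T` in the family `𝒯`, of order `n`, satisfies `γ_L(T) = n/2`. -/
theorem locDomNumber_of_familyT {V : Type*} [Fintype V] (T : SimpleGraph V)
    (hT : FamilyT T) : 2 * locDomNumber T = Fintype.card V := by
  classical
  obtain ⟨htree, M, c, hpm, hedge, hwhite⟩ := hT
  choose m hm1 hm2 using fun v => hpm.1 (hpm.2 v)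
  have minv : ∀ v, m (m v) = v := fun v => (hm2 (m v) v ((hm1 v).symm)).symm
  have madj : ∀ v, T.Adj v (m v) := fun v => M.adj_sub (hm1 v)
  have mcol : ∀ v, c (m v) ≠ c v := fun v => (hedge v (m v) (hm1 v)).symm
  have mblack : ∀ v, c v = false → c (m v) = true := by
    intro v h; have := mcol v; rw [h] at this
    cases hb : c (m v) <;> simp_all
  have mwhitef : ∀ v, c v = true → c (m v) = false := by
    intro v h; have := mcol v; rw [h] at this
    cases hb : c (m v) <;> simp_all
  have ctrue : ∀ v : V, ¬ c v = false → c v = true := by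
    intro v h
    cases hcv : c v
    · exact absurd hcv h
    · rfl
  have minj : Function.Injective m := by
    intro a b h; rw [← minv a, h, minv]
  -- no two distinct vertices have two distinct common neighbors (tree)
  have no4 : ∀ u v x y : V, u ≠ v → x ≠ y → T.Adj u x → T.Adj v x → T.Adj u y →
      T.Adj v y → False := by
    intro u v x y huv hxy hux hvx huy hvy
    have hp : T.IsAcyclic := htree.IsAcyclic
    have pxw : (SimpleGraph.Walk.cons hux (SimpleGraph.Walk.cons hvx.symm
        SimpleGraph.Walk.nil)).IsPath := by
      simp [SimpleGraph.Walk.isPath_def, hux.ne, huv, hvx.ne']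
    have pyw : (SimpleGraph.Walk.cons huy (SimpleGraph.Walk.cons hvy.symm
        SimpleGraph.Walk.nil)).IsPath := by
      simp [SimpleGraph.Walk.isPath_def, huy.ne, huv, hvy.ne']
    have := hp.path_unique ⟨_, pxw⟩ ⟨_, pyw⟩
    have := congrArg (fun p => (p : T.Path u v).1.support) this
    simp at this
    exact hxy this
  -- the set of black vertices
  set B : Set V := {v | c v = true} with hB
  have hnotB : ∀ v, v ∉ B ↔ c v = false := by
    intro v; constructor
    · intro h; cases hv : c v
      · rfl
      · exact absurd hv h
    · intro h hv; rw [hB] at hv; simp only [Set.mem_setOf_eq] at hv; simp [hv] at h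
  have hBld : IsLocatingDominatingSet T B := by
    constructor
    · intro v hv
      exact ⟨m v, mblack v ((hnotB v).mp hv), (madj v).symm⟩
    · intro u hu v hv huv heq
      have h1 : m u ∈ {w | w ∈ B ∧ T.Adj u w} := ⟨mblack u ((hnotB u).mp hu), madj u⟩
      have h2 : m v ∈ {w | w ∈ B ∧ T.Adj v w} := ⟨mblack v ((hnotB v).mp hv), madj v⟩
      rw [heq] at h1
      rw [← heq] at h2
      exact no4 u v (m u) (m v) huv (fun h => huv (minj h)) (madj u) h1.2 h2.2 (madj v)
  have hBcard : 2 * B.ncard = Fintype.card V := by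
    have himg : m '' B = Bᶜ := by
      ext v; constructor
      · rintro ⟨b, hb, rfl⟩
        rw [Set.mem_compl_iff, hnotB]
        exact mwhitef b hb
      · intro hv
        exact ⟨m v, mblack v ((hnotB v).mp hv), minv v⟩
    have h1 : Bᶜ.ncard = B.ncard := by
      rw [← himg, Set.ncard_image_of_injective _ minj]
    have h2 := Set.ncard_add_ncard_compl B
    rw [Nat.card_eq_fintype_card] at h2
    omega
  -- lower bound: every locating-dominating set has at least n/2 elements
  have hlower : ∀ D : Set V, IsLocatingDominatingSet T D →
      Fintype.card V ≤ 2 * D.ncard := by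
    intro D hD
    obtain ⟨hdom, hloc⟩ := hD
    have key : ∀ w : V, (c w = false ∧ w ∉ D ∧ m w ∉ D) →
        ∃ l : V, l ∈ D ∧ c l = false ∧ m l ∈ D ∧
          {z | z ∈ D ∧ T.Adj w z} = {m l} := by
      rintro w ⟨hw, hwD, hmwD⟩
      have hnleaf : ¬ IsLeaf T w := by
        intro hlf
        obtain ⟨u, huD, huw⟩ := hdom w hwD
        obtain ⟨a, ha⟩ := Set.ncard_eq_one.mp hlf
        have h1 : m w ∈ T.neighborSet w := madj w
        have h2 : u ∈ T.neighborSet w := huw.symm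
        rw [ha] at h1 h2
        simp only [Set.mem_singleton_iff] at h1 h2
        rw [h2, ← h1] at huD
        exact hmwD huD
      rcases hwhite w hw with hlf | ⟨hdeg2, b, hwb, hcb, l, hbl, hcl, hlleaf⟩
      · exact absurd hlf hnleaf
      have hlb : T.neighborSet l = {b} := by
        obtain ⟨a, ha⟩ := Set.ncard_eq_one.mp hlleaf
        have h1 : b ∈ T.neighborSet l := hbl.symm
        rw [ha] at h1
        simp only [Set.mem_singleton_iff] at h1
        rw [ha, h1]
      have hml : m l = b := by
        have h1 : m l ∈ T.neighborSet l := madj l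
        rw [hlb] at h1
        exact h1
      have hlw : l ≠ w := by
        intro h; rw [h] at hlleaf; exact hnleaf hlleaf
      have hbmw : b ≠ m w := by
        intro h
        exact hlw (by rw [← minv l, hml, h, minv])
      have hnw : T.neighborSet w = {m w, b} := by
        refine (Set.eq_of_subset_of_ncard_le ?_ ?_ (Set.toFinite _)).symm
        · rintro z (rfl | rfl)
          · exact madj w
          · exact hwb
        · rw [hdeg2, Set.ncard_pair (Ne.symm hbmw)]
      have hbD : b ∈ D := by
        obtain ⟨u, huD, huw⟩ := hdom w hwD
        have h2 : u ∈ T.neighborSet w := huw.symm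
        rw [hnw] at h2
        rcases h2 with rfl | rfl
        · exact absurd huD hmwD
        · exact huD
      have htw : {z | z ∈ D ∧ T.Adj w z} = {b} := by
        ext z; constructor
        · rintro ⟨hzD, hzw⟩
          have h2 : z ∈ T.neighborSet w := hzw
          rw [hnw] at h2
          rcases h2 with rfl | rfl
          · exact absurd hzD hmwD
          · rfl
        · rintro rfl
          exact ⟨hbD, hwb⟩
      have hlD : l ∈ D := by
        by_contra hlD
        have htl : {z | z ∈ D ∧ T.Adj l z} = {b} := by
          ext z; constructor
          · rintro ⟨hzD, hzl⟩
            have h2 : z ∈ T.neighborSet l := hzl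
            rw [hlb] at h2
            exact h2
          · rintro rfl
            exact ⟨hbD, hbl.symm⟩
        exact hloc w hwD l hlD (Ne.symm hlw) (htw.trans htl.symm)
      exact ⟨l, hlD, hcl, hml ▸ hbD, by rw [htw, hml]⟩
    have key' : ∀ w : V, ∃ l : V, (c w = false ∧ w ∉ D ∧ m w ∉ D) →
        (l ∈ D ∧ c l = false ∧ m l ∈ D ∧ {z | z ∈ D ∧ T.Adj w z} = {m l}) := by
      intro w
      by_cases h : c w = false ∧ w ∉ D ∧ m w ∉ D
      · obtain ⟨l, hl⟩ := key w h
        exact ⟨l, fun _ => hl⟩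
      · exact ⟨w, fun hc => absurd hc h⟩
    choose ℓ hℓ using key'
    set R : V → V := fun w => if m w ∈ D then m w else if w ∈ D then w else ℓ w with hR
    have RD : ∀ w, c w = false → w ∉ D → R w ∈ D := by
      intro w hw hwD
      rw [hR]; dsimp only
      by_cases a : m w ∈ D
      · simpa [a]
      · simp [a, hwD]
        exact (hℓ w ⟨hw, hwD, a⟩).1
    have RD' : ∀ w, c w = false → R w ∈ D := by
      intro w hw
      by_cases hwD : w ∈ D
      · rw [hR]; dsimp only
        by_cases a : m w ∈ D
        · simpa [a]
        · simpa [a, hwD]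
      · exact RD w hw hwD
    have Rinj : ∀ w1 w2, c w1 = false → c w2 = false → R w1 = R w2 → w1 = w2 := by
      intro w1 w2 h1 h2 hReq
      rw [hR] at hReq; dsimp only at hReq
      by_cases a1 : m w1 ∈ D <;> by_cases a2 : m w2 ∈ D
      · simp only [a1, a2, if_pos] at hReq
        exact minj hReq
      · simp only [a1, a2, if_pos, if_neg, if_true, if_false] at hReq
        by_cases b2 : w2 ∈ D
        · rw [if_pos b2] at hReq
          have := mblack w1 h1
          rw [hReq, h2] at this
          exact absurd this (by simp)
        · rw [if_neg b2] at hReq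
          have hp := hℓ w2 ⟨h2, b2, a2⟩
          have := mblack w1 h1
          rw [hReq, hp.2.1] at this
          exact absurd this (by simp)
      · simp only [a1, a2, if_pos, if_neg, if_true, if_false] at hReq
        by_cases b1 : w1 ∈ D
        · rw [if_pos b1] at hReq
          have := mblack w2 h2
          rw [← hReq, h1] at this
          exact absurd this (by simp)
        · rw [if_neg b1] at hReq
          have hp := hℓ w1 ⟨h1, b1, a1⟩
          have := mblack w2 h2
          rw [← hReq, hp.2.1] at this
          exact absurd this (by simp)
      · simp only [a1, a2, if_neg, if_false] at hReq
        by_cases b1 : w1 ∈ D <;> by_cases b2 : w2 ∈ D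
        · rwa [if_pos b1, if_pos b2] at hReq
        · rw [if_pos b1, if_neg b2] at hReq
          have hp := hℓ w2 ⟨h2, b2, a2⟩
          exact absurd (hReq ▸ hp.2.2.1) a1
        · rw [if_neg b1, if_pos b2] at hReq
          have hp := hℓ w1 ⟨h1, b1, a1⟩
          exact absurd (hReq ▸ hp.2.2.1) a2
        · rw [if_neg b1, if_neg b2] at hReq
          have hp1 := hℓ w1 ⟨h1, b1, a1⟩
          have hp2 := hℓ w2 ⟨h2, b2, a2⟩
          by_contra hne
          apply hloc w1 b1 w2 b2 hne
          rw [hp1.2.2.2, hp2.2.2.2, hReq]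
    -- build the injection V → D × Bool
    have hF : ∃ F : V → ↥D × Bool, Function.Injective F := by
      refine ⟨fun v => if hv : c v = false then (⟨R v, RD' v hv⟩, false)
        else (⟨R (m v), RD' (m v) (mwhitef v (ctrue v hv))⟩, true), ?_⟩
      intro u v huv
      by_cases hu : c u = false <;> by_cases hv : c v = false
      · simp only [hu, hv, dif_pos] at huv
        exact Rinj u v hu hv (congrArg Subtype.val (congrArg Prod.fst huv))
      · simp only [hu, hv, dif_pos, dif_neg, not_false_iff] at huv
        exact absurd (congrArg Prod.snd huv) (by simp)
      · simp only [hu, hv, dif_pos, dif_neg, not_false_iff] at huv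
        exact absurd (congrArg Prod.snd huv) (by simp)
      · simp only [hu, hv, dif_neg, not_false_iff] at huv
        have hu' : c u = true := ctrue u hu
        have hv' : c v = true := ctrue v hv
        have := Rinj (m u) (m v) (mwhitef u hu') (mwhitef v hv')
          (congrArg Subtype.val (congrArg Prod.fst huv))
        exact minj this
    obtain ⟨F, hFinj⟩ := hF
    have hcard := Fintype.card_le_of_injective F hFinj
    rw [Fintype.card_prod, Fintype.card_bool] at hcard
    have : D.ncard = Fintype.card ↥D := by
      rw [Set.ncard_eq_toFinset_card', Set.toFinset_card]
    omega
  -- conclude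
  have hBmem : B.ncard ∈ {n : ℕ | ∃ D : Set V, IsLocatingDominatingSet T D ∧
      D.ncard = n} := ⟨B, hBld, rfl⟩
  have h1 : locDomNumber T ≤ B.ncard := Nat.sInf_le hBmem
  have h2 := Nat.sInf_mem (⟨B.ncard, hBmem⟩ : Set.Nonempty _)
  obtain ⟨D, hD, hDcard⟩ := h2
  have h3 := hlower D hD
  unfold locDomNumber at h1 ⊢
  omega
end

section
/- For every tree T in the family 𝒯, with perfect matching M and black/white coloring as in the definition of 𝒯, the set of black vertices of T is a locating-dominating set of T of cardinality half the order of T. -/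
/-- For every tree `T` in the family `𝒯`, with perfect matching `M` and black/white
coloring `c` as in the definition of `𝒯`, the set of black vertices of `T` is a
locating-dominating set of `T` of cardinality half the order of `T`. -/
theorem blackSet_isLocatingDominatingSet {V : Type*} [Fintype V] (T : SimpleGraph V)
    (hT : T.IsTree) (M : T.Subgraph) (c : V → Bool) (h : GoodMatchingColoring T M c) :
    IsLocatingDominatingSet T {v : V | c v = true} ∧
      2 * ({v : V | c v = true} : Set V).ncard = Fintype.card V := by
  classical
  obtain ⟨hpm, hcol, -⟩ := h
  have hex : ∀ v : V, ∃ w, M.Adj v w := fun v => (hpm.1 (hpm.2 v)).exists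
  choose f hfadj using hex
  have hfinv : ∀ v, f (f v) = v := fun v =>
    (hpm.1 (hpm.2 (f v))).unique (hfadj (f v)) (hfadj v).symm
  have hadjT : ∀ v, T.Adj v (f v) := fun v => M.adj_sub (hfadj v)
  have hcf : ∀ v, c (f v) ≠ c v := fun v => (hcol v (f v) (hfadj v)).symm
  have hblack : ∀ v, c v = false → c (f v) = true := by
    intro v hv
    cases hcv : c (f v) with
    | true => rfl
    | false => exact absurd (hcv.trans hv.symm) (hcf v)
  constructor
  · constructor
    · intro v hv
      have hv' : c v = false := by simpa using hv
      exact ⟨f v, hblack v hv', (hadjT v).symm⟩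
    · intro u hu v hv huv heq
      have hu' : c u = false := by simpa using hu
      have hv' : c v = false := by simpa using hv
      have hfu : f u ∈ {w | w ∈ {v : V | c v = true} ∧ T.Adj u w} :=
        ⟨hblack u hu', hadjT u⟩
      have hfv : f v ∈ {w | w ∈ {v : V | c v = true} ∧ T.Adj v w} :=
        ⟨hblack v hv', hadjT v⟩
      have h1 : T.Adj v (f u) := (heq ▸ hfu).2
      have h2 : T.Adj u (f v) := (heq.symm ▸ hfv).2
      have hne1 : f u ≠ v := fun e => by
        have := hblack u hu'; rw [e, hv'] at this; exact absurd this (by simp)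
      have hne2 : f v ≠ v := fun e => by
        have := hblack v hv'; rw [e, hv'] at this; exact absurd this (by simp)
      have hne3 : u ≠ f u := (hadjT u).ne
      have hne4 : u ≠ f v := h2.ne
      let p1 : T.Walk u v := .cons (hadjT u) (.cons h1.symm .nil)
      let p2 : T.Walk u v := .cons h2 (.cons ((M.adj_sub (hfadj v)).symm) .nil)
      have hp1 : p1.IsPath := by
        simp [p1, SimpleGraph.Walk.isPath_def, huv, hne1, hne3]
      have hp2 : p2.IsPath := by
        simp [p2, SimpleGraph.Walk.isPath_def, huv, hne2, hne4]
      have hpe : p1 = p2 := (hT.existsUnique_path u v).unique hp1 hp2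
      have hsup : p1.support = p2.support := by rw [hpe]
      have : f u = f v := by simpa [p1, p2] using hsup
      exact huv (by rw [← hfinv u, this, hfinv v])
  · have htf : ({v : V | c v = true} : Set V).ncard
        = (Finset.univ.filter (fun v => c v = true)).card := by
      rw [Set.ncard_eq_toFinset_card']
      congr 1
      ext v
      simp
    have hbij : (Finset.univ.filter (fun v => c v = true)).card
        = (Finset.univ.filter (fun v => c v = false)).card := by
      apply Finset.card_bij (fun a _ => f a)
      · intro a ha
        simp only [Finset.mem_filter, Finset.mem_univ, true_and] at ha ⊢
        cases hcv : c (f a) with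
        | false => rfl
        | true => exact absurd (hcv.trans ha.symm) (hcf a)
      · intro a ha b hb hab
        rw [← hfinv a, hab, hfinv b]
      · intro b hb
        simp only [Finset.mem_filter, Finset.mem_univ, true_and] at hb
        exact ⟨f b, by simp [Finset.mem_filter, hblack b hb], hfinv b⟩
    have hsum : (Finset.univ.filter (fun v => c v = true)).card
        + (Finset.univ.filter (fun v => c v = false)).card = Fintype.card V := by
      rw [← Finset.card_univ, ← Finset.card_filter_add_card_filter_not
        (p := fun v => c v = true) (s := Finset.univ)]
      congr 1
      apply congrArg
      apply Finset.filter_congr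
      intro x _
      simp [Bool.not_eq_true]
    omega
end

section
/- If G is a twin-free co-bipartite graph of order n with no isolated vertices, then gamma_L(G) <= n/2. -/
open scoped symmDiff

lemma bad_card {α : Type*} [DecidableEq α] [Fintype α]
    (F : Finset (Finset α)) :
    (Finset.univ.filter (fun a : α => ∃ S ∈ F, ∃ T ∈ F, S ∆ T = {a})).card ≤ F.card - 1 := by
  classical
  induction F using Finset.strongInduction with
  | _ F ih =>
    by_cases hbad : (Finset.univ.filter (fun a : α => ∃ S ∈ F, ∃ T ∈ F, S ∆ T = {a})).Nonempty
    · obtain ⟨a, ha⟩ := hbad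
      rw [Finset.mem_filter] at ha
      obtain ⟨-, S, hS, T, hT, hST⟩ := ha
      have haST : a ∈ S ∆ T := by rw [hST]; exact Finset.mem_singleton_self a
      set F0 := F.filter (fun X => a ∉ X) with hF0
      set F1 := F.filter (fun X => a ∈ X) with hF1
      have hmemST : (a ∈ S ∧ a ∉ T) ∨ (a ∈ T ∧ a ∉ S) := by
        rw [Finset.mem_symmDiff] at haST; tauto
      have h0ne : F0.Nonempty := by
        rcases hmemST with ⟨h1, h2⟩ | ⟨h1, h2⟩
        · exact ⟨T, Finset.mem_filter.2 ⟨hT, h2⟩⟩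
        · exact ⟨S, Finset.mem_filter.2 ⟨hS, h2⟩⟩
      have h1ne : F1.Nonempty := by
        rcases hmemST with ⟨h1, h2⟩ | ⟨h1, h2⟩
        · exact ⟨S, Finset.mem_filter.2 ⟨hS, h1⟩⟩
        · exact ⟨T, Finset.mem_filter.2 ⟨hT, h1⟩⟩
      have hss0 : F0 ⊂ F := by
        refine ⟨Finset.filter_subset _ _, fun hsub => ?_⟩
        obtain ⟨X, hX⟩ := h1ne
        rw [Finset.mem_filter] at hX
        have := Finset.mem_filter.1 (hsub hX.1)
        exact this.2 hX.2
      have hss1 : F1 ⊂ F := by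
        refine ⟨Finset.filter_subset _ _, fun hsub => ?_⟩
        obtain ⟨X, hX⟩ := h0ne
        rw [Finset.mem_filter] at hX
        have := Finset.mem_filter.1 (hsub hX.1)
        exact hX.2 this.2
      have hsubset : (Finset.univ.filter (fun b : α => ∃ S ∈ F, ∃ T ∈ F, S ∆ T = {b})) ⊆
          insert a ((Finset.univ.filter (fun b : α => ∃ S ∈ F0, ∃ T ∈ F0, S ∆ T = {b})) ∪
            (Finset.univ.filter (fun b : α => ∃ S ∈ F1, ∃ T ∈ F1, S ∆ T = {b}))) := by
        intro b hb
        rw [Finset.mem_filter] at hb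
        obtain ⟨-, S', hS', T', hT', hb'⟩ := hb
        by_cases hba : b = a
        · exact Finset.mem_insert.2 (Or.inl hba)
        · have hiff : (a ∈ S') ↔ (a ∈ T') := by
            constructor <;> intro h <;> by_contra h2
            · have : a ∈ S' ∆ T' := Finset.mem_symmDiff.2 (Or.inl ⟨h, h2⟩)
              rw [hb'] at this
              exact hba (Finset.mem_singleton.1 this).symm
            · have : a ∈ S' ∆ T' := Finset.mem_symmDiff.2 (Or.inr ⟨h, h2⟩)
              rw [hb'] at this
              exact hba (Finset.mem_singleton.1 this).symm
          refine Finset.mem_insert.2 (Or.inr (Finset.mem_union.2 ?_))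
          by_cases haS : a ∈ S'
          · exact Or.inr (Finset.mem_filter.2 ⟨Finset.mem_univ _,
              S', Finset.mem_filter.2 ⟨hS', haS⟩, T', Finset.mem_filter.2 ⟨hT', hiff.1 haS⟩, hb'⟩)
          · exact Or.inl (Finset.mem_filter.2 ⟨Finset.mem_univ _,
              S', Finset.mem_filter.2 ⟨hS', haS⟩, T', Finset.mem_filter.2 ⟨hT', fun h => haS (hiff.2 h)⟩, hb'⟩)
      have hcard := Finset.card_le_card hsubset
      have hins := Finset.card_insert_le a ((Finset.univ.filter (fun b : α => ∃ S ∈ F0, ∃ T ∈ F0, S ∆ T = {b})) ∪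
            (Finset.univ.filter (fun b : α => ∃ S ∈ F1, ∃ T ∈ F1, S ∆ T = {b})))
      have hun := Finset.card_union_le (Finset.univ.filter (fun b : α => ∃ S ∈ F0, ∃ T ∈ F0, S ∆ T = {b}))
            (Finset.univ.filter (fun b : α => ∃ S ∈ F1, ∃ T ∈ F1, S ∆ T = {b}))
      have i0 := ih F0 hss0
      have i1 := ih F1 hss1
      have hsplit : F0.card + F1.card = F.card := by
        have h := Finset.card_filter_add_card_filter_not (s := F) (p := fun X => a ∉ X)
        have he : F.filter (fun X => ¬ a ∉ X) = F1 := by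
          apply Finset.filter_congr
          intro X _
          simp
        rw [he] at h
        exact h
      have hc0 : 1 ≤ F0.card := Finset.Nonempty.card_pos h0ne
      have hc1 : 1 ≤ F1.card := Finset.Nonempty.card_pos h1ne
      omega
    · rw [Finset.not_nonempty_iff_eq_empty] at hbad
      rw [hbad]
      simp


lemma key {V : Type*} [Fintype V] (G : SimpleGraph V)
    (htf : TwinFree G) (hiso : NoIsolatedVertex G)
    (A : Set V) (hA : G.IsClique A) (hB : G.IsClique Aᶜ)
    (hle : A.ncard ≤ Aᶜ.ncard) :
    ∃ D : Set V, IsLocatingDominatingSet G D ∧ 2 * D.ncard ≤ Fintype.card V := by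
  classical
  have htot : A.ncard + Aᶜ.ncard = Fintype.card V := by
    simpa [Nat.card_eq_fintype_card] using Set.ncard_add_ncard_compl A
  -- closed neighborhood description for vertices of Aᶜ
  have hcn : ∀ w ∈ Aᶜ, insert w (G.neighborSet w) = Aᶜ ∪ (G.neighborSet w ∩ A) := by
    intro w hw
    ext x
    constructor
    · intro hx
      rcases Set.mem_insert_iff.1 hx with rfl | hx
      · exact Or.inl hw
      · by_cases hxA : x ∈ A
        · exact Or.inr ⟨hx, hxA⟩
        · exact Or.inl hxA
    · rintro (hx | hx)
      · by_cases hxw : x = w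
        · exact hxw ▸ Set.mem_insert _ _
        · exact Set.mem_insert_of_mem _ (hB hw hx (fun h => hxw h.symm))
      · exact Set.mem_insert_of_mem _ hx.1
  -- trace injectivity on Aᶜ
  have htr : ∀ u ∈ Aᶜ, ∀ v ∈ Aᶜ, u ≠ v →
      G.neighborSet u ∩ A ≠ G.neighborSet v ∩ A := by
    intro u hu v hv huv h
    exact (htf u v huv).2 (by rw [hcn u hu, hcn v hv, h])
  by_cases hv0 : ∃ v0 ∈ Aᶜ, G.neighborSet v0 ∩ A = ∅
  · obtain ⟨v0, hv0B, hv0tr⟩ := hv0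
    have hnadj : ∀ a ∈ A, ¬ G.Adj v0 a := by
      intro a haA hadj
      have : a ∈ G.neighborSet v0 ∩ A := ⟨hadj, haA⟩
      rw [hv0tr] at this
      exact this
    by_cases hbig : A.ncard + 2 ≤ Aᶜ.ncard
    · -- D = insert v0 A
      refine ⟨insert v0 A, ⟨?_, ?_⟩, ?_⟩
      · intro v hv
        have hvB : v ∈ Aᶜ := fun hvA => hv (Set.mem_insert_of_mem _ hvA)
        have hvv0 : v ≠ v0 := fun h => hv (h ▸ Set.mem_insert _ _)
        exact ⟨v0, Set.mem_insert _ _, hB hv0B hvB (fun h => hvv0 h.symm)⟩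
      · intro u hu v hv huv heq
        have huB : u ∈ Aᶜ := fun hA' => hu (Set.mem_insert_of_mem _ hA')
        have hvB : v ∈ Aᶜ := fun hA' => hv (Set.mem_insert_of_mem _ hA')
        apply htr u huB v hvB huv
        ext x
        constructor
        · rintro ⟨hadj, hxA⟩
          have : x ∈ {w | w ∈ insert v0 A ∧ G.Adj u w} := ⟨Set.mem_insert_of_mem _ hxA, hadj⟩
          rw [heq] at this
          exact ⟨this.2, hxA⟩
        · rintro ⟨hadj, hxA⟩
          have : x ∈ {w | w ∈ insert v0 A ∧ G.Adj v w} := ⟨Set.mem_insert_of_mem _ hxA, hadj⟩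
          rw [← heq] at this
          exact ⟨this.2, hxA⟩
      · have : (insert v0 A).ncard = A.ncard + 1 :=
          Set.ncard_insert_of_notMem (fun h => hv0B h) A.toFinite
        omega
    · -- small case : Aᶜ.ncard ≤ A.ncard + 1
      push_neg at hbig
      -- first, A has at least two vertices
      have hA2 : 2 ≤ A.ncard := by
        by_contra h
        push_neg at h
        have h01 : A.ncard = 0 ∨ A.ncard = 1 := by omega
        rcases h01 with h0 | h1
        · -- A empty : closed twins in the clique Aᶜ
          have hAe : A = ∅ := (Set.ncard_eq_zero A.toFinite).1 h0
          obtain ⟨u, hu⟩ := hiso v0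
          have huv0 : u ≠ v0 := fun h => G.irrefl (h ▸ hu)
          apply (htf v0 u (fun h => huv0 h.symm)).2
          have h1 : insert v0 (G.neighborSet v0) = Aᶜ ∪ (G.neighborSet v0 ∩ A) := hcn v0 hv0B
          have h2 : insert u (G.neighborSet u) = Aᶜ ∪ (G.neighborSet u ∩ A) :=
            hcn u (by simp [hAe])
          rw [h1, h2, hAe]
          simp
        · -- A = {a} : open twins a and v0
          obtain ⟨a, hAa⟩ := Set.ncard_eq_one.1 h1
          obtain ⟨u, hu⟩ := hiso a
          have hua : u ≠ a := fun h => G.irrefl (h ▸ hu)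
          have huB : u ∈ Aᶜ := fun hmem => hua (by rw [hAa] at hmem; exact hmem)
          have haA : a ∈ A := by rw [hAa]; rfl
          have huv0 : u ≠ v0 := fun h => hnadj a haA (h ▸ hu).symm
          have hv0u : v0 ≠ u := fun h => huv0 h.symm
          have hsub : ({v0, u} : Set V) ⊆ Aᶜ := by
            intro x hx
            rcases hx with rfl | rfl
            · exact hv0B
            · exact huB
          have hcard2 : ({v0, u} : Set V).ncard = 2 := Set.ncard_pair hv0u
          have hBeq : ({v0, u} : Set V) = Aᶜ :=
            Set.eq_of_subset_of_ncard_le hsub (by omega) (Set.toFinite _)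
          have hav0 : a ≠ v0 := fun h => hv0B (h ▸ haA)
          apply (htf a v0 hav0).1
          have hNa : G.neighborSet a = {u} := by
            ext x
            constructor
            · intro hx
              have hxa : x ≠ a := fun h => G.irrefl (h ▸ hx)
              have hxB : x ∈ Aᶜ := fun hmem => hxa (by rw [hAa] at hmem; exact hmem)
              rw [← hBeq] at hxB
              rcases hxB with rfl | rfl
              · exact absurd hx.symm (hnadj a haA)
              · rfl
            · intro hx
              rw [Set.mem_singleton_iff] at hx
              exact hx ▸ hu
          have hNv0 : G.neighborSet v0 = {u} := by
            ext x
            constructor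
            · intro hx
              have hxv0 : x ≠ v0 := fun h => G.irrefl (h ▸ hx)
              by_cases hxA : x ∈ A
              · exact absurd hx (hnadj x hxA)
              · have : x ∈ ({v0, u} : Set V) := by rw [hBeq]; exact hxA
                rcases this with rfl | rfl
                · exact absurd rfl hxv0
                · rfl
            · intro hx
              rw [Set.mem_singleton_iff] at hx
              exact hx ▸ (hB hv0B huB hv0u)
          rw [hNa, hNv0]
      -- sets of vertices and traces as finsets
      set Bf : Finset V := (Aᶜ \ {v0} : Set V).toFinite.toFinset with hBf
      set tr : V → Finset V := fun v => (G.neighborSet v ∩ A).toFinite.toFinset with htrdef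
      set F : Finset (Finset V) := Bf.image tr with hFdef
      have hmemBf : ∀ x, x ∈ Bf ↔ x ∈ Aᶜ ∧ x ≠ v0 := by
        intro x
        rw [hBf, Set.Finite.mem_toFinset, Set.mem_diff, Set.mem_singleton_iff]
      have hmemtr : ∀ v x, x ∈ tr v ↔ G.Adj v x ∧ x ∈ A := by
        intro v x
        rw [htrdef]
        simp only [Set.Finite.mem_toFinset, Set.mem_inter_iff, SimpleGraph.mem_neighborSet]
      have htrne : ∀ u ∈ Bf, ∀ v ∈ Bf, u ≠ v → tr u ≠ tr v := by
        intro u hu v hv huv h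
        apply htr u ((hmemBf u).1 hu).1 v ((hmemBf v).1 hv).1 huv
        ext x
        rw [← Set.Finite.mem_toFinset (G.neighborSet u ∩ A).toFinite,
          ← Set.Finite.mem_toFinset (G.neighborSet v ∩ A).toFinite]
        rw [htrdef] at h
        rw [show (G.neighborSet u ∩ A).toFinite.toFinset = (G.neighborSet v ∩ A).toFinite.toFinset from h]
      have hBfcard : Bf.card = Aᶜ.ncard - 1 := by
        rw [hBf, ← Set.ncard_eq_toFinset_card]
        exact Set.ncard_diff_singleton_of_mem hv0B
      have hFcard : F.card = Bf.card := by
        rw [hFdef]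
        apply Finset.card_image_of_injOn
        intro u hu v hv h
        by_contra hne
        exact htrne u hu v hv hne h
      have hFle : F.card ≤ A.ncard := by
        have : 1 ≤ Aᶜ.ncard := by
          have : v0 ∈ Aᶜ := hv0B
          have := Set.ncard_pos (Set.toFinite Aᶜ) |>.2 ⟨v0, hv0B⟩
          omega
        omega
      set Bad : Finset V := Finset.univ.filter (fun a : V => ∃ S ∈ F, ∃ T ∈ F, S ∆ T = {a}) with hBadDef
      have hBadCard : Bad.card ≤ F.card - 1 := bad_card F
      have hnotsub : ¬ (A.toFinite.toFinset ⊆ Bad) := by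
        intro hsub
        have hc := Finset.card_le_card hsub
        rw [← Set.ncard_eq_toFinset_card] at hc
        omega
      obtain ⟨a, haA', haBad⟩ := Finset.not_subset.1 hnotsub
      have haA : a ∈ A := (Set.Finite.mem_toFinset _).1 haA'
      -- the locating-dominating set
      refine ⟨insert v0 (A \ {a}), ⟨?_, ?_⟩, ?_⟩
      · -- dominating
        intro v hv
        by_cases hvA : v ∈ A
        · have hva : v = a := by
            by_contra h
            exact hv (Set.mem_insert_of_mem _ ⟨hvA, h⟩)
          obtain ⟨b, hbA, c, hcA, hbc⟩ := (Set.one_lt_ncard A.toFinite).1 (by omega)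
          by_cases hba : b = a
          · have hca : c ≠ a := fun h => hbc (hba.trans h.symm)
            exact ⟨c, Set.mem_insert_of_mem _ ⟨hcA, hca⟩, hva ▸ hA hcA haA hca⟩
          · exact ⟨b, Set.mem_insert_of_mem _ ⟨hbA, hba⟩, hva ▸ hA hbA haA hba⟩
        · have hvv0 : v ≠ v0 := fun h => hv (h ▸ Set.mem_insert _ _)
          exact ⟨v0, Set.mem_insert _ _, hB hv0B hvA (fun h => hvv0 h.symm)⟩
      · -- locating
        intro u hu v hv huv heq
        have hclass : ∀ x, x ∉ insert v0 (A \ {a}) → x = a ∨ (x ∈ Aᶜ ∧ x ≠ v0) := by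
          intro x hx
          by_cases hxA : x ∈ A
          · left
            by_contra h
            exact hx (Set.mem_insert_of_mem _ ⟨hxA, h⟩)
          · exact Or.inr ⟨hxA, fun h => hx (h ▸ Set.mem_insert _ _)⟩
        -- if one vertex is a and other is in Aᶜ \ {v0}, codes differ at v0
        have hcross : ∀ w, w ∈ Aᶜ → w ≠ v0 →
            v0 ∈ {x | x ∈ insert v0 (A \ {a}) ∧ G.Adj w x} ∧
            v0 ∉ {x | x ∈ insert v0 (A \ {a}) ∧ G.Adj a x} := by
          intro w hwB hwv0
          constructor
          · exact ⟨Set.mem_insert _ _, hB hwB hv0B hwv0⟩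
          · rintro ⟨-, hadj⟩
            exact hnadj a haA hadj.symm
        rcases hclass u hu with rfl | ⟨huB, huv0⟩
        · rcases hclass v hv with rfl | ⟨hvB, hvv0⟩
          · exact huv rfl
          · obtain ⟨h1, h2⟩ := hcross v hvB hvv0
            rw [heq] at h2
            exact h2 h1
        · rcases hclass v hv with rfl | ⟨hvB, hvv0⟩
          · obtain ⟨h1, h2⟩ := hcross u huB huv0
            rw [← heq] at h2
            exact h2 h1
          · -- both in Aᶜ \ {v0} : use the good coordinate a
            have huBf : u ∈ Bf := (hmemBf u).2 ⟨huB, huv0⟩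
            have hvBf : v ∈ Bf := (hmemBf v).2 ⟨hvB, hvv0⟩
            have htrneq : tr u ≠ tr v := htrne u huBf v hvBf huv
            have hΔne : (tr u ∆ tr v) ≠ ∅ := by
              intro h
              exact htrneq (symmDiff_eq_bot.1 h)
            have hΔa : tr u ∆ tr v ≠ {a} := by
              intro h
              exact haBad (Finset.mem_filter.2 ⟨Finset.mem_univ _,
                tr u, Finset.mem_image_of_mem tr huBf, tr v, Finset.mem_image_of_mem tr hvBf, h⟩)
            obtain ⟨b, hbΔ, hba⟩ : ∃ b ∈ tr u ∆ tr v, b ≠ a := by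
              by_contra h
              push_neg at h
              have hsub : tr u ∆ tr v ⊆ {a} := fun x hx => Finset.mem_singleton.2 (h x hx)
              rcases Finset.subset_singleton_iff.1 hsub with h' | h'
              · exact hΔne h'
              · exact hΔa h'
            -- b is adjacent to exactly one of u, v and lies in D
            rcases Finset.mem_symmDiff.1 hbΔ with ⟨hbu, hbv⟩ | ⟨hbv, hbu⟩
            · obtain ⟨hadj, hbA⟩ := (hmemtr u b).1 hbu
              have hbD : b ∈ {x | x ∈ insert v0 (A \ {a}) ∧ G.Adj u x} :=
                ⟨Set.mem_insert_of_mem _ ⟨hbA, hba⟩, hadj⟩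
              rw [heq] at hbD
              exact hbv ((hmemtr v b).2 ⟨hbD.2, hbA⟩)
            · obtain ⟨hadj, hbA⟩ := (hmemtr v b).1 hbv
              have hbD : b ∈ {x | x ∈ insert v0 (A \ {a}) ∧ G.Adj v x} :=
                ⟨Set.mem_insert_of_mem _ ⟨hbA, hba⟩, hadj⟩
              rw [← heq] at hbD
              exact hbu ((hmemtr u b).2 ⟨hbD.2, hbA⟩)
      · -- cardinality
        have h1 : (A \ {a} : Set V).ncard = A.ncard - 1 :=
          Set.ncard_diff_singleton_of_mem haA
        have h2 : v0 ∉ (A \ {a} : Set V) := fun h => hv0B h.1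
        have h3 : (insert v0 (A \ {a} : Set V)).ncard = (A \ {a} : Set V).ncard + 1 :=
          Set.ncard_insert_of_notMem h2 (Set.toFinite _)
        omega
  · -- D = A
    push_neg at hv0
    refine ⟨A, ⟨?_, ?_⟩, ?_⟩
    · intro v hv
      obtain ⟨x, hx1, hx2⟩ := hv0 v hv
      exact ⟨x, hx2, hx1.symm⟩
    · intro u hu v hv huv heq
      apply htr u hu v hv huv
      ext x
      constructor
      · rintro ⟨hadj, hxA⟩
        have : x ∈ {w | w ∈ A ∧ G.Adj u w} := ⟨hxA, hadj⟩
        rw [heq] at this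
        exact ⟨this.2, hxA⟩
      · rintro ⟨hadj, hxA⟩
        have : x ∈ {w | w ∈ A ∧ G.Adj v w} := ⟨hxA, hadj⟩
        rw [← heq] at this
        exact ⟨this.2, hxA⟩
    · omega

/-- If `G` is a twin-free co-bipartite graph of order `n` (its vertex set can be
partitioned into two cliques) with no isolated vertices, then `γ_L(G) ≤ n/2`. -/
theorem locDomNumber_le_half_of_coBipartite {V : Type*} [Fintype V] (G : SimpleGraph V)
    (htf : TwinFree G) (hiso : NoIsolatedVertex G)
    (hcb : ∃ s : Set V, G.IsClique s ∧ G.IsClique sᶜ) :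
    2 * locDomNumber G ≤ Fintype.card V := by
  obtain ⟨s, hs, hsc⟩ := hcb
  have hmain : ∃ D : Set V, IsLocatingDominatingSet G D ∧ 2 * D.ncard ≤ Fintype.card V := by
    by_cases h : s.ncard ≤ sᶜ.ncard
    · exact key G htf hiso s hs hsc h
    · refine key G htf hiso sᶜ hsc ?_ ?_
      · rwa [compl_compl]
      · rw [compl_compl]
        omega
  obtain ⟨D, hLD, hc⟩ := hmain
  have hinf : locDomNumber G ≤ D.ncard := Nat.sInf_le ⟨D, hLD, rfl⟩
  omega
end

section
/- If G is a twin-free split graph of order n with no isolated vertices, then gamma_L(G) <= n/2. -/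
lemma two_mul_locDomNumber_le {V : Type*} [Fintype V] (G : SimpleGraph V) (D : Set V)
    (h1 : IsLocatingDominatingSet G D) (h2 : IsLocatingDominatingSet G Dᶜ) :
    2 * locDomNumber G ≤ Fintype.card V := by
  have a : locDomNumber G ≤ D.ncard := Nat.sInf_le ⟨D, h1, rfl⟩
  have b : locDomNumber G ≤ Dᶜ.ncard := Nat.sInf_le ⟨Dᶜ, h2, rfl⟩
  have hc : D.ncard + Dᶜ.ncard = Fintype.card V := by
    rw [Set.ncard_add_ncard_compl, Nat.card_eq_fintype_card]
  omega

/-- For a vertex `a` in the clique `s`, if `sᶜ ⊆ D`, the closed neighborhood of `a`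
is `s ∪ (D ∩ N(a))`. -/
lemma closed_nbhd_eq {V : Type*} (G : SimpleGraph V) {s D : Set V} (hcl : G.IsClique s)
    (hsub : sᶜ ⊆ D) {a : V} (ha : a ∈ s) :
    insert a (G.neighborSet a) = s ∪ {w | w ∈ D ∧ G.Adj a w} := by
  ext w
  simp only [Set.mem_insert_iff, SimpleGraph.mem_neighborSet, Set.mem_union, Set.mem_setOf_eq]
  constructor
  · rintro (rfl | hadj)
    · exact Or.inl ha
    · by_cases hws : w ∈ s
      · exact Or.inl hws
      · exact Or.inr ⟨hsub hws, hadj⟩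
  · rintro (hws | ⟨-, hadj⟩)
    · by_cases h : w = a
      · exact Or.inl h
      · exact Or.inr (hcl ha hws (fun e => h e.symm))
    · exact Or.inr hadj

/-- If `G` is a twin-free split graph of order `n` (its vertex set can be partitioned into
a clique and an independent set) with no isolated vertices, then `γ_L(G) ≤ n/2`. -/
theorem locDomNumber_le_half_of_split {V : Type*} [Fintype V] (G : SimpleGraph V)
    (htf : TwinFree G) (hiso : NoIsolatedVertex G)
    (hsplit : ∃ s : Set V, G.IsClique s ∧ ∀ u ∈ sᶜ, ∀ v ∈ sᶜ, ¬ G.Adj u v) :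
    2 * locDomNumber G ≤ Fintype.card V := by
  obtain ⟨s, hcl, hind⟩ := hsplit
  by_cases hx : ∃ x ∈ s, ∀ v ∈ sᶜ, ¬ G.Adj x v
  · -- Case B : there is a clique vertex `x` with no neighbor outside `s`.
    obtain ⟨x, hxs, hxn⟩ := hx
    have hDc : (sᶜ ∪ {x})ᶜ = s \ {x} := by
      rw [Set.compl_union, compl_compl, Set.diff_eq]
    apply two_mul_locDomNumber_le G (sᶜ ∪ {x})
    · constructor
      · intro v hv
        have hvs : v ∈ s := by
          by_contra h; exact hv (Or.inl h)
        have hvx : v ≠ x := by rintro rfl; exact hv (Or.inr rfl)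
        exact ⟨x, Or.inr rfl, hcl hxs hvs (fun e => hvx e.symm)⟩
      · intro u hu v hv hne heq
        have hus : u ∈ s := by by_contra h; exact hu (Or.inl h)
        have hvs : v ∈ s := by by_contra h; exact hv (Or.inl h)
        apply (htf u v hne).2
        rw [closed_nbhd_eq G hcl Set.subset_union_left hus,
            closed_nbhd_eq G hcl Set.subset_union_left hvs, heq]
    · rw [hDc]
      have key : ∀ a, a ∉ s \ {x} →
          G.neighborSet a = {w | w ∈ s \ {x} ∧ G.Adj a w} := by
        intro a ha
        have hax : a ∈ sᶜ ∨ a = x := by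
          by_cases h : a ∈ s
          · right; by_contra h'; exact ha ⟨h, h'⟩
          · exact Or.inl h
        ext w
        simp only [SimpleGraph.mem_neighborSet, Set.mem_setOf_eq, Set.mem_diff,
          Set.mem_singleton_iff]
        constructor
        · intro hadj
          refine ⟨⟨?_, ?_⟩, hadj⟩
          · rcases hax with h | rfl
            · by_contra hw; exact hind a h w hw hadj
            · by_contra hw; exact hxn w hw hadj
          · rcases hax with h | rfl
            · rintro rfl; exact hxn a h hadj.symm
            · rintro rfl; exact G.irrefl hadj
        · exact fun h => h.2
      constructor
      · intro v hv
        have hvx : v ∈ sᶜ ∨ v = x := by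
          by_cases h : v ∈ s
          · right; by_contra h'; exact hv ⟨h, h'⟩
          · exact Or.inl h
        rcases hvx with h | rfl
        · obtain ⟨u, hadj⟩ := hiso v
          have hus : u ∈ s := by by_contra hu; exact hind v h u hu hadj
          have hux : u ≠ x := by rintro rfl; exact hxn v h hadj.symm
          exact ⟨u, ⟨hus, hux⟩, hadj.symm⟩
        · obtain ⟨u, hadj⟩ := hiso v
          have hus : u ∈ s := by by_contra hu; exact hxn u hu hadj
          have hux : u ≠ v := fun e => G.irrefl (e ▸ hadj)
          exact ⟨u, ⟨hus, hux⟩, hadj.symm⟩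
      · intro u hu v hv hne heq
        exact (htf u v hne).1 (by rw [key u hu, key v hv, heq])
  · -- Case A : every clique vertex has a neighbor outside `s`.
    push_neg at hx
    apply two_mul_locDomNumber_le G s
    · constructor
      · intro v hv
        obtain ⟨u, hadj⟩ := hiso v
        have hus : u ∈ s := by by_contra hu; exact hind v hv u hu hadj
        exact ⟨u, hus, hadj.symm⟩
      · intro u hu v hv hne heq
        have key : ∀ a, a ∉ s → G.neighborSet a = {w | w ∈ s ∧ G.Adj a w} := by
          intro a ha
          ext w
          simp only [SimpleGraph.mem_neighborSet, Set.mem_setOf_eq]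
          refine ⟨fun hadj => ⟨?_, hadj⟩, fun h => h.2⟩
          by_contra hw; exact hind a ha w hw hadj
        exact (htf u v hne).1 (by rw [key u hu, key v hv, heq])
    · constructor
      · intro v hv
        have hvs : v ∈ s := not_not.mp hv
        obtain ⟨w, hw, hadj⟩ := hx v hvs
        exact ⟨w, hw, hadj.symm⟩
      · intro u hu v hv hne heq
        have hus : u ∈ s := not_not.mp hu
        have hvs : v ∈ s := not_not.mp hv
        apply (htf u v hne).2
        rw [closed_nbhd_eq G hcl (subset_refl _) hus,
            closed_nbhd_eq G hcl (subset_refl _) hvs, heq]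
end

section
/- For every integer k >= 3, the graph H_k has order 2k+4, domination number gamma(H_k) = 2, and location-domination number gamma_L(H_k) = k+2, which is exactly half its order. -/
/-- The graph `H_k`, with vertices `a = inl 0`, `b = inl 1`, `a' = inl 2`, `b' = inl 3`,
`c_i = inr (inl i)` and `s_i = inr (inr i)`, and edges `b c_i`, `a s_i`, `s_i c_i`
(for all `i`), together with the pendant edges `a a'` and `b b'`. -/
def Hgraph (k : ℕ) : SimpleGraph (Fin 4 ⊕ (Fin k ⊕ Fin k)) :=
  SimpleGraph.fromRel (fun x y =>
    (∃ i : Fin k, x = Sum.inl 1 ∧ y = Sum.inr (Sum.inl i)) ∨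
    (∃ i : Fin k, x = Sum.inl 0 ∧ y = Sum.inr (Sum.inr i)) ∨
    (∃ i : Fin k, x = Sum.inr (Sum.inr i) ∧ y = Sum.inr (Sum.inl i)) ∨
    (x = Sum.inl 0 ∧ y = Sum.inl 2) ∨
    (x = Sum.inl 1 ∧ y = Sum.inl 3))

section Helpers
variable {k : ℕ}

lemma adj_c (x : Fin 4 ⊕ (Fin k ⊕ Fin k)) (i : Fin k) :
    (Hgraph k).Adj x (Sum.inr (Sum.inl i)) ↔ x = Sum.inl 1 ∨ x = Sum.inr (Sum.inr i) := by
  rcases x with f | j | j <;> simp [Hgraph, SimpleGraph.fromRel_adj] <;> aesop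

lemma adj_s (x : Fin 4 ⊕ (Fin k ⊕ Fin k)) (i : Fin k) :
    (Hgraph k).Adj x (Sum.inr (Sum.inr i)) ↔ x = Sum.inl 0 ∨ x = Sum.inr (Sum.inl i) := by
  rcases x with f | j | j <;> simp [Hgraph, SimpleGraph.fromRel_adj] <;> aesop

lemma adj_a' (x : Fin 4 ⊕ (Fin k ⊕ Fin k)) :
    (Hgraph k).Adj x (Sum.inl 2) ↔ x = Sum.inl 0 := by
  rcases x with f | j | j <;> simp [Hgraph, SimpleGraph.fromRel_adj] <;> aesop

lemma adj_b' (x : Fin 4 ⊕ (Fin k ⊕ Fin k)) :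
    (Hgraph k).Adj x (Sum.inl 3) ↔ x = Sum.inl 1 := by
  rcases x with f | j | j <;> simp [Hgraph, SimpleGraph.fromRel_adj] <;> aesop

lemma dom_two (k : ℕ) : dominationNumber (Hgraph k) = 2 := by
  have hmem : 2 ∈ {n : ℕ | ∃ D, IsDominatingSet (Hgraph k) D ∧ D.ncard = n} := by
    refine ⟨{Sum.inl 0, Sum.inl 1}, ?_, ?_⟩
    · intro v hv
      rcases v with f | j | j
      · fin_cases f
        · simp at hv
        · simp at hv
        · exact ⟨Sum.inl 0, by simp, (adj_a' _).2 rfl⟩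
        · exact ⟨Sum.inl 1, by simp, (adj_b' _).2 rfl⟩
      · exact ⟨Sum.inl 1, by simp, (adj_c _ j).2 (Or.inl rfl)⟩
      · exact ⟨Sum.inl 0, by simp, (adj_s _ j).2 (Or.inl rfl)⟩
    · rw [Set.ncard_pair (by simp)]
  have h0 : (0:ℕ) ∉ {n : ℕ | ∃ D, IsDominatingSet (Hgraph k) D ∧ D.ncard = n} := by
    rintro ⟨D, hdom, hcard⟩
    rw [Set.ncard_eq_zero (Set.toFinite D)] at hcard
    subst hcard
    obtain ⟨u, hu, -⟩ := hdom (Sum.inl 0) (by simp)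
    exact hu
  have h1 : (1:ℕ) ∉ {n : ℕ | ∃ D, IsDominatingSet (Hgraph k) D ∧ D.ncard = n} := by
    rintro ⟨D, hdom, hcard⟩
    obtain ⟨w, rfl⟩ := Set.ncard_eq_one.mp hcard
    by_cases hw : w = Sum.inl 2
    · obtain ⟨u, hu, hadj⟩ := hdom (Sum.inl 3) (by simp [hw])
      rw [Set.mem_singleton_iff] at hu
      subst hu
      have := (adj_b' _).1 hadj
      rw [hw] at this
      exact absurd (Sum.inl.inj this) (by decide)
    · obtain ⟨u, hu, hadj⟩ := hdom (Sum.inl 2) (fun h => hw h.symm)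
      rw [Set.mem_singleton_iff] at hu
      subst hu
      have hw0 := (adj_a' _).1 hadj
      subst hw0
      obtain ⟨u, hu, hadj⟩ := hdom (Sum.inl 3) (by simp)
      rw [Set.mem_singleton_iff] at hu
      subst hu
      have := (adj_b' _).1 hadj
      exact absurd (Sum.inl.inj this) (by decide)
  have hne : {n : ℕ | ∃ D, IsDominatingSet (Hgraph k) D ∧ D.ncard = n}.Nonempty := ⟨2, hmem⟩
  have hle := Nat.sInf_le hmem
  have hm := Nat.sInf_mem hne
  unfold dominationNumber
  rcases Nat.lt_or_ge (sInf {n : ℕ | ∃ D, IsDominatingSet (Hgraph k) D ∧ D.ncard = n}) 2 with h | h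
  · interval_cases hh : (sInf {n : ℕ | ∃ D, IsDominatingSet (Hgraph k) D ∧ D.ncard = n})
    · exact absurd hm h0
    · exact absurd hm h1
  · omega
end Helpers

section Upper
variable {k : ℕ}

def D0 (k : ℕ) : Set (Fin 4 ⊕ (Fin k ⊕ Fin k)) :=
  insert (Sum.inl 0) (insert (Sum.inl 1) (Set.range (fun i => Sum.inr (Sum.inr i))))

lemma D0_card (k : ℕ) : (D0 k).ncard = k + 2 := by
  rw [D0, Set.ncard_insert_of_notMem (by simp), Set.ncard_insert_of_notMem (by simp),
    ← Set.image_univ, Set.ncard_image_of_injective _ (fun i j h => by simpa using h),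
    Set.ncard_univ, Nat.card_eq_fintype_card, Fintype.card_fin]

lemma D0_LD (k : ℕ) : IsLocatingDominatingSet (Hgraph k) (D0 k) := by
  constructor
  · intro v hv
    rcases v with f | j | j
    · fin_cases f
      · exact absurd (by simp [D0]) hv
      · exact absurd (by simp [D0]) hv
      · exact ⟨Sum.inl 0, by simp [D0], (adj_a' _).2 rfl⟩
      · exact ⟨Sum.inl 1, by simp [D0], (adj_b' _).2 rfl⟩
    · exact ⟨Sum.inl 1, by simp [D0], (adj_c _ j).2 (Or.inl rfl)⟩
    · exact absurd (by simp [D0]) hv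
  · intro u hu v hv hne heq
    have key : ∀ x : Fin 4 ⊕ (Fin k ⊕ Fin k), x ∉ D0 k →
        x = Sum.inl 2 ∨ x = Sum.inl 3 ∨ ∃ i, x = Sum.inr (Sum.inl i) := by
      intro x hx
      rcases x with f | j | j
      · fin_cases f
        · exact absurd (by simp [D0]) hx
        · exact absurd (by simp [D0]) hx
        · exact Or.inl rfl
        · exact Or.inr (Or.inl rfl)
      · exact Or.inr (Or.inr ⟨j, rfl⟩)
      · exact absurd (by simp [D0]) hx
    -- trace facts:
    have tr2 : ∀ x : Fin 4 ⊕ (Fin k ⊕ Fin k),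
        x ∈ {w | w ∈ D0 k ∧ (Hgraph k).Adj (Sum.inl 2) w} ↔ x = Sum.inl 0 := by
      intro x
      constructor
      · rintro ⟨-, hadj⟩
        exact (adj_a' x).1 hadj.symm
      · rintro rfl
        exact ⟨by simp [D0], ((adj_a' _).2 rfl).symm⟩
    have tr3 : ∀ x : Fin 4 ⊕ (Fin k ⊕ Fin k),
        x ∈ {w | w ∈ D0 k ∧ (Hgraph k).Adj (Sum.inl 3) w} ↔ x = Sum.inl 1 := by
      intro x
      constructor
      · rintro ⟨-, hadj⟩
        exact (adj_b' x).1 hadj.symm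
      · rintro rfl
        exact ⟨by simp [D0], ((adj_b' _).2 rfl).symm⟩
    have trc : ∀ (i : Fin k) (x : Fin 4 ⊕ (Fin k ⊕ Fin k)),
        x ∈ {w | w ∈ D0 k ∧ (Hgraph k).Adj (Sum.inr (Sum.inl i)) w} ↔
          (x = Sum.inl 1 ∨ x = Sum.inr (Sum.inr i)) := by
      intro i x
      constructor
      · rintro ⟨-, hadj⟩
        exact (adj_c x i).1 hadj.symm
      · rintro (rfl | rfl)
        · exact ⟨by simp [D0], ((adj_c _ i).2 (Or.inl rfl)).symm⟩
        · exact ⟨by simp [D0], ((adj_c _ i).2 (Or.inr rfl)).symm⟩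
    rcases key u hu with rfl | rfl | ⟨i, rfl⟩ <;> rcases key v hv with rfl | rfl | ⟨j, rfl⟩
    · exact hne rfl
    · have h := (Set.ext_iff.mp heq (Sum.inl 0)).1 ((tr2 _).2 rfl)
      have := (tr3 _).1 h
      exact absurd (Sum.inl.inj this) (by decide)
    · have h := (Set.ext_iff.mp heq (Sum.inl 0)).1 ((tr2 _).2 rfl)
      rcases (trc j _).1 h with h' | h'
      · exact absurd (Sum.inl.inj h') (by decide)
      · simp at h'
    · have h := (Set.ext_iff.mp heq (Sum.inl 1)).1 ((tr3 _).2 rfl)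
      have := (tr2 _).1 h
      exact absurd (Sum.inl.inj this) (by decide)
    · exact hne rfl
    · have h := (Set.ext_iff.mp heq (Sum.inr (Sum.inr j))).2 ((trc j _).2 (Or.inr rfl))
      have := (tr3 _).1 h
      simp at this
    · have h := (Set.ext_iff.mp heq (Sum.inr (Sum.inr i))).1 ((trc i _).2 (Or.inr rfl))
      have := (tr2 _).1 h
      simp at this
    · have h := (Set.ext_iff.mp heq (Sum.inr (Sum.inr i))).1 ((trc i _).2 (Or.inr rfl))
      have := (tr3 _).1 h
      simp at this
    · have hij : i ≠ j := fun h => hne (by rw [h])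
      have h := (Set.ext_iff.mp heq (Sum.inr (Sum.inr i))).1 ((trc i _).2 (Or.inr rfl))
      rcases (trc j _).1 h with h' | h'
      · simp at h'
      · exact hij (by simpa using h')
end Upper

section Lower
open Classical in
lemma LD_lower (k : ℕ) {D : Set (Fin 4 ⊕ (Fin k ⊕ Fin k))}
    (hD : IsLocatingDominatingSet (Hgraph k) D) : k + 2 ≤ D.ncard := by
  classical
  obtain ⟨hdom, hloc⟩ := hD
  by_cases hbad : ∃ i : Fin k, Sum.inr (Sum.inl i) ∉ D ∧ Sum.inr (Sum.inr i) ∉ D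
  · obtain ⟨i0, hc0, hs0⟩ := hbad
    have ha : Sum.inl 0 ∈ D := by
      obtain ⟨u, hu, hadj⟩ := hdom _ hs0
      rcases (adj_s u i0).1 hadj with h | h
      · exact h ▸ hu
      · exact absurd (h ▸ hu) hc0
    have hb : Sum.inl 1 ∈ D := by
      obtain ⟨u, hu, hadj⟩ := hdom _ hc0
      rcases (adj_c u i0).1 hadj with h | h
      · exact h ▸ hu
      · exact absurd (h ▸ hu) hs0
    have ha' : Sum.inl 2 ∈ D := by
      by_contra ha'
      apply hloc _ ha' _ hs0 (by simp)
      ext w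
      simp only [Set.mem_setOf_eq]
      constructor
      · rintro ⟨hw, hadj⟩
        have h := (adj_a' w).1 hadj.symm
        subst h
        exact ⟨hw, ((adj_s _ i0).2 (Or.inl rfl)).symm⟩
      · rintro ⟨hw, hadj⟩
        rcases (adj_s w i0).1 hadj.symm with h | h
        · subst h; exact ⟨hw, ((adj_a' _).2 rfl).symm⟩
        · exact absurd (h ▸ hw) hc0
    have hb' : Sum.inl 3 ∈ D := by
      by_contra hb'
      apply hloc _ hb' _ hc0 (by simp)
      ext w
      simp only [Set.mem_setOf_eq]
      constructor
      · rintro ⟨hw, hadj⟩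
        have h := (adj_b' w).1 hadj.symm
        subst h
        exact ⟨hw, ((adj_c _ i0).2 (Or.inl rfl)).symm⟩
      · rintro ⟨hw, hadj⟩
        rcases (adj_c w i0).1 hadj.symm with h | h
        · subst h; exact ⟨hw, ((adj_b' _).2 rfl).symm⟩
        · exact absurd (h ▸ hw) hs0
    have huniq : ∀ j : Fin k, j ≠ i0 →
        (Sum.inr (Sum.inl j) ∈ D ∨ Sum.inr (Sum.inr j) ∈ D) := by
      intro j hj
      by_contra h
      push_neg at h
      obtain ⟨hcj, hsj⟩ := h
      apply hloc _ hcj _ hc0 (by simp [hj])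
      ext w
      simp only [Set.mem_setOf_eq]
      constructor
      · rintro ⟨hw, hadj⟩
        rcases (adj_c w j).1 hadj.symm with h | h
        · subst h; exact ⟨hw, ((adj_c _ i0).2 (Or.inl rfl)).symm⟩
        · exact absurd (h ▸ hw) hsj
      · rintro ⟨hw, hadj⟩
        rcases (adj_c w i0).1 hadj.symm with h | h
        · subst h; exact ⟨hw, ((adj_c _ j).2 (Or.inl rfl)).symm⟩
        · exact absurd (h ▸ hw) hs0
    set φ : Fin k → Fin 4 ⊕ (Fin k ⊕ Fin k) := fun j =>
      if Sum.inr (Sum.inl j) ∈ D then Sum.inr (Sum.inl j)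
      else if Sum.inr (Sum.inr j) ∈ D then Sum.inr (Sum.inr j) else Sum.inl 0 with hφ
    have hφspec : ∀ j, (φ j = Sum.inr (Sum.inl j) ∧ φ j ∈ D) ∨
        (φ j = Sum.inr (Sum.inr j) ∧ φ j ∈ D) ∨ (φ j = Sum.inl 0 ∧ j = i0) := by
      intro j
      by_cases h1 : Sum.inr (Sum.inl j) ∈ D
      · exact Or.inl ⟨by simp [hφ, h1], by simp [hφ, h1]⟩
      · by_cases h2 : Sum.inr (Sum.inr j) ∈ D
        · exact Or.inr (Or.inl ⟨by simp [hφ, h1, h2], by simp [hφ, h1, h2]⟩)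
        · refine Or.inr (Or.inr ⟨by simp [hφ, h1, h2], ?_⟩)
          by_contra hj
          rcases huniq j hj with h | h
          · exact h1 h
          · exact h2 h
    have hφD : ∀ j, φ j ∈ D := by
      intro j
      rcases hφspec j with h | h | h
      · exact h.2
      · exact h.2
      · rw [h.1]; exact ha
    have hinj : Function.Injective φ := by
      intro i j hij
      rcases hφspec i with h | h | h <;> rcases hφspec j with h' | h' | h' <;>
        rw [h.1, h'.1] at hij <;> first
          | (exact Sum.inl.inj (Sum.inr.inj hij))
          | (exact Sum.inr.inj (Sum.inr.inj hij))
          | (exact h.2.trans h'.2.symm)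
          | simp at hij
    classical
    let S : Finset (Fin 4 ⊕ (Fin k ⊕ Fin k)) :=
      insert (Sum.inl 2) (insert (Sum.inl 3) (Finset.univ.image φ))
    have hnot3 : (Sum.inl 3 : Fin 4 ⊕ (Fin k ⊕ Fin k)) ∉ Finset.univ.image φ := by
      simp only [Finset.mem_image, Finset.mem_univ, true_and]
      rintro ⟨j, hj⟩
      rcases hφspec j with h | h | h <;> rw [h.1] at hj <;> simp at hj
    have hnot2 : (Sum.inl 2 : Fin 4 ⊕ (Fin k ⊕ Fin k)) ∉
        insert (Sum.inl 3) (Finset.univ.image φ) := by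
      simp only [Finset.mem_insert]
      rintro (h | h)
      · exact absurd (Sum.inl.inj h) (by decide)
      · revert h
        simp only [Finset.mem_image, Finset.mem_univ, true_and]
        rintro ⟨j, hj⟩
        rcases hφspec j with h | h | h <;> rw [h.1] at hj <;> simp at hj
    have hcard : S.card = k + 2 := by
      rw [Finset.card_insert_of_notMem hnot2, Finset.card_insert_of_notMem hnot3,
        Finset.card_image_of_injective _ hinj, Finset.card_univ, Fintype.card_fin]
    have hsub : ↑S ⊆ D := by
      intro x hx
      simp only [S, Finset.coe_insert, Set.mem_insert_iff, Finset.coe_image,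
        Finset.coe_univ, Set.image_univ, Set.mem_range] at hx
      rcases hx with rfl | rfl | ⟨j, rfl⟩
      · exact ha'
      · exact hb'
      · exact hφD j
    calc k + 2 = S.card := hcard.symm
      _ = (↑S : Set _).ncard := (Set.ncard_coe_finset S).symm
      _ ≤ D.ncard := Set.ncard_le_ncard hsub (Set.toFinite D)
  · push_neg at hbad
    have hA : ∃ x, x ∈ D ∧ (x = Sum.inl 0 ∨ x = Sum.inl 2) := by
      by_cases h : Sum.inl 2 ∈ D
      · exact ⟨_, h, Or.inr rfl⟩
      · obtain ⟨u, hu, hadj⟩ := hdom _ h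
        have := (adj_a' u).1 hadj
        exact ⟨u, hu, Or.inl this⟩
    have hB : ∃ y, y ∈ D ∧ (y = Sum.inl 1 ∨ y = Sum.inl 3) := by
      by_cases h : Sum.inl 3 ∈ D
      · exact ⟨_, h, Or.inr rfl⟩
      · obtain ⟨u, hu, hadj⟩ := hdom _ h
        have := (adj_b' u).1 hadj
        exact ⟨u, hu, Or.inl this⟩
    obtain ⟨x, hxD, hx⟩ := hA
    obtain ⟨y, hyD, hy⟩ := hB
    set φ : Fin k → Fin 4 ⊕ (Fin k ⊕ Fin k) := fun j =>
      if Sum.inr (Sum.inl j) ∈ D then Sum.inr (Sum.inl j) else Sum.inr (Sum.inr j) with hφ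
    have hφspec : ∀ j, (φ j = Sum.inr (Sum.inl j) ∧ φ j ∈ D) ∨
        (φ j = Sum.inr (Sum.inr j) ∧ φ j ∈ D) := by
      intro j
      by_cases h1 : Sum.inr (Sum.inl j) ∈ D
      · exact Or.inl ⟨by simp [hφ, h1], by simp [hφ, h1]⟩
      · exact Or.inr ⟨by simp [hφ, h1], by simp [hφ, h1]; exact hbad j h1⟩
    have hφD : ∀ j, φ j ∈ D := fun j => by rcases hφspec j with h | h <;> exact h.2
    have hinj : Function.Injective φ := by
      intro i j hij
      rcases hφspec i with h | h <;> rcases hφspec j with h' | h' <;>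
        rw [h.1, h'.1] at hij <;> first
          | (exact Sum.inl.inj (Sum.inr.inj hij))
          | (exact Sum.inr.inj (Sum.inr.inj hij))
          | simp at hij
    let S : Finset (Fin 4 ⊕ (Fin k ⊕ Fin k)) :=
      insert x (insert y (Finset.univ.image φ))
    have hnoty : y ∉ Finset.univ.image φ := by
      simp only [Finset.mem_image, Finset.mem_univ, true_and]
      rintro ⟨j, hj⟩
      rcases hφspec j with h | h <;> rcases hy with rfl | rfl <;> rw [h.1] at hj <;> simp at hj
    have hnotx : x ∉ insert y (Finset.univ.image φ) := by
      simp only [Finset.mem_insert]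
      rintro (h | h)
      · rcases hx with rfl | rfl <;> rcases hy with rfl | rfl <;>
          exact absurd (Sum.inl.inj h) (by decide)
      · revert h
        simp only [Finset.mem_image, Finset.mem_univ, true_and]
        rintro ⟨j, hj⟩
        rcases hφspec j with h | h <;> rcases hx with rfl | rfl <;> rw [h.1] at hj <;> simp at hj
    have hcard : S.card = k + 2 := by
      rw [Finset.card_insert_of_notMem hnotx, Finset.card_insert_of_notMem hnoty,
        Finset.card_image_of_injective _ hinj, Finset.card_univ, Fintype.card_fin]
    have hsub : ↑S ⊆ D := by
      intro z hz
      simp only [S, Finset.coe_insert, Set.mem_insert_iff, Finset.coe_image,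
        Finset.coe_univ, Set.image_univ, Set.mem_range] at hz
      rcases hz with rfl | rfl | ⟨j, rfl⟩
      · exact hxD
      · exact hyD
      · exact hφD j
    calc k + 2 = S.card := hcard.symm
      _ = (↑S : Set _).ncard := (Set.ncard_coe_finset S).symm
      _ ≤ D.ncard := Set.ncard_le_ncard hsub (Set.toFinite D)
end Lower


/-- For every integer `k ≥ 3`, the graph `H_k` has order `2k + 4`, domination number
`γ(H_k) = 2`, and location-domination number `γ_L(H_k) = k + 2`, which is exactly half
its order. -/
theorem Hgraph_numbers (k : ℕ) (hk : 3 ≤ k) :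
    Fintype.card (Fin 4 ⊕ (Fin k ⊕ Fin k)) = 2 * k + 4 ∧
      dominationNumber (Hgraph k) = 2 ∧
      locDomNumber (Hgraph k) = k + 2 ∧
      2 * locDomNumber (Hgraph k) = Fintype.card (Fin 4 ⊕ (Fin k ⊕ Fin k)) := by
  have hcard : Fintype.card (Fin 4 ⊕ (Fin k ⊕ Fin k)) = 2 * k + 4 := by
    simp [Fintype.card_sum, Fintype.card_fin]; ring
  have hloc : locDomNumber (Hgraph k) = k + 2 := by
    have hub : k + 2 ∈ {n : ℕ | ∃ D, IsLocatingDominatingSet (Hgraph k) D ∧ D.ncard = n} :=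
      ⟨D0 k, D0_LD k, D0_card k⟩
    refine le_antisymm (Nat.sInf_le hub) (le_csInf ⟨_, hub⟩ ?_)
    rintro n ⟨D, hD, rfl⟩
    exact LD_lower k hD
  exact ⟨hcard, dom_two k, hloc, by rw [hloc, hcard]; ring⟩
end

section
/- Let H be a graph and let G be the corona of H, obtained from H by adding, for each vertex v of H, a new vertex v' together with the pendant edge v v'. Then every dominating set of G is a locating-dominating set of G. -/
/-- The corona of a graph `H`: for each vertex `v` of `H` (here `Sum.inl v`), add a new
pendant vertex `v' = Sum.inr v` adjacent only to `v`. -/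
def Corona {V : Type*} (H : SimpleGraph V) : SimpleGraph (V ⊕ V) where
  Adj x y :=
    match x, y with
    | Sum.inl a, Sum.inl b => H.Adj a b
    | Sum.inl a, Sum.inr b => a = b
    | Sum.inr a, Sum.inl b => b = a
    | Sum.inr _, Sum.inr _ => False
  symm := by
    constructor
    rintro (a | a) (b | b) h
    · exact h.symm
    · exact h
    · exact h
    · exact h.elim
  loopless := by
    constructor
    rintro (a | a) h
    · exact H.irrefl h
    · exact h

/-- If `G` is the corona of a graph `H`, then every dominating set of `G` is a
locating-dominating set of `G`. -/
theorem corona_dominating_is_locatingDominating {V : Type*} (H : SimpleGraph V)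
    (D : Set (V ⊕ V)) (hD : IsDominatingSet (Corona H) D) :
    IsLocatingDominatingSet (Corona H) D := by
  have key : ∀ a, Sum.inl a ∉ D → Sum.inr a ∈ D := by
    intro a ha
    by_contra h
    obtain ⟨w, hwD, hw⟩ := hD _ h
    rcases w with b | b
    · have hb : b = a := hw
      exact ha (hb ▸ hwD)
    · exact hw
  refine ⟨hD, ?_⟩
  rintro (a | a) hu (b | b) hv hne heq
  · have h1 := key a hu
    have hmem : Sum.inr a ∈ {w | w ∈ D ∧ (Corona H).Adj (Sum.inl a) w} := ⟨h1, rfl⟩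
    rw [heq] at hmem
    have hb : b = a := hmem.2
    exact hne (by rw [hb])
  · have h1 := key a hu
    have hmem : Sum.inr a ∈ {w | w ∈ D ∧ (Corona H).Adj (Sum.inl a) w} := ⟨h1, rfl⟩
    rw [heq] at hmem
    exact hmem.2
  · have h1 := key b hv
    have hmem : Sum.inr b ∈ {w | w ∈ D ∧ (Corona H).Adj (Sum.inl b) w} := ⟨h1, rfl⟩
    rw [← heq] at hmem
    exact hmem.2
  · have h1 : Sum.inl a ∈ D := by
      obtain ⟨w, hwD, hw⟩ := hD _ hu
      rcases w with c | c
      · have hc : c = a := hw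
        exact hc ▸ hwD
      · exact hw.elim
    have hmem : Sum.inl a ∈ {w | w ∈ D ∧ (Corona H).Adj (Sum.inr a) w} := ⟨h1, rfl⟩
    rw [heq] at hmem
    have hc : a = b := hmem.2
    exact hne (by rw [hc])
end
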